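/- arXiv:1511.08624 — 6 statements merged into one kernel-verified Lean document; each statement's English description precedes it below -/
import Mathlib

section
/- For every integer ℓ ≥ 1, all μ, μ̃ ∈ Δ_k, all Q, Q̃ ∈ Δ_k^k, and all f, f̃ ∈ F^k: ∫ |p_ℓ^{μ,Q,f} − p_ℓ^{μ̃,Q̃,f̃}| dλ^{⊗ℓ} ≤ Σ_{i=1}^k |μ_i − μ̃_i| + k(ℓ−1) max_{1≤i,j≤k} |Q_{i,j} − Q̃_{i,j}| + ℓ max_{1≤i≤k} ∫ |f_i − f̃_i| dλ. -/
open MeasureTheory Filter Real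
open scoped ENNReal

noncomputable section

/-- `μ ∈ Δ_k`: probability vector. -/
def inSimplex {k : ℕ} (μ : Fin k → ℝ) : Prop :=
  (∀ i, 0 ≤ μ i) ∧ ∑ i, μ i = 1

/-- `μ ∈ Δ_k(q)`: probability vector with all entries ≥ q. -/
def inSimplexGe {k : ℕ} (q : ℝ) (μ : Fin k → ℝ) : Prop :=
  inSimplex μ ∧ ∀ i, q ≤ μ i

/-- `Q ∈ Δ_k^k`: row-stochastic matrix. -/
def rowStochastic {k : ℕ} (Q : Fin k → Fin k → ℝ) : Prop :=
  ∀ i, inSimplex (Q i)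

/-- `Q ∈ Δ_k^k(q)`: row-stochastic matrix with all entries ≥ q. -/
def rowStochasticGe {k : ℕ} (q : ℝ) (Q : Fin k → Fin k → ℝ) : Prop :=
  ∀ i, inSimplexGe q (Q i)

/-- `f ∈ F`: probability density function with respect to `lam`. -/
def IsDensity {d : ℕ} (lam : Measure (Fin d → ℝ)) (f : (Fin d → ℝ) → ℝ) : Prop :=
  Measurable f ∧ (∀ y, 0 ≤ f y) ∧ ∫⁻ y, ENNReal.ofReal (f y) ∂lam = 1

/-- joint density `p_n^{μ,Q,f}` of the first `n` observations of the HMM with initial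
distribution `μ`, transition matrix `Q` and emission densities `f`. -/
def hmmJoint {k d : ℕ} (μ : Fin k → ℝ) (Q : Fin k → Fin k → ℝ)
    (f : Fin k → (Fin d → ℝ) → ℝ) (n : ℕ) (y : Fin n → (Fin d → ℝ)) : ℝ :=
  ∑ x : Fin n → Fin k, ∏ t : Fin n,
    (if (t : ℕ) = 0 then μ (x t)
     else Q (x ⟨(t : ℕ) - 1, lt_of_le_of_lt (Nat.sub_le _ _) t.isLt⟩) (x t)) * f (x t) (y t)

/-- prediction filter after `t` observations (paper's `w_{t+1}`, 0-indexed observations). -/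
def predFilter {k d : ℕ} (μ : Fin k → ℝ) (Q : Fin k → Fin k → ℝ)
    (f : Fin k → (Fin d → ℝ) → ℝ) (y : ℕ → (Fin d → ℝ)) : ℕ → Fin k → ℝ
  | 0 => μ
  | t + 1 => fun i =>
      (∑ j, predFilter μ Q f y t j * Q j i * f j (y t)) /
        (∑ j, predFilter μ Q f y t j * f j (y t))

/-- extension of a finite observation vector to an infinite sequence (by `0`). -/
def extSeq {d n : ℕ} (y : Fin n → (Fin d → ℝ)) : ℕ → (Fin d → ℝ) :=
  fun s => if h : s < n then y ⟨s, h⟩ else 0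

/-- `‖Q - Q'‖ = max_{i,j} |Q_{i,j} - Q'_{i,j}|`. -/
def matDist {k : ℕ} (Q Q' : Fin k → Fin k → ℝ) : ℝ :=
  ⨆ i, ⨆ j, |Q i j - Q' i j|

/-- `ρ = (1 - kq)/(1 - (k-1)q)`. -/
def mixRho (k : ℕ) (q : ℝ) : ℝ := (1 - (k : ℝ) * q) / (1 - ((k : ℝ) - 1) * q)

namespace Stmt7

def chainW {k : ℕ} (μ : Fin k → ℝ) (Q : Fin k → Fin k → ℝ) (n : ℕ) (x : Fin n → Fin k) : ℝ :=
  ∏ t : Fin n, (if (t : ℕ) = 0 then μ (x t)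
     else Q (x ⟨(t : ℕ) - 1, lt_of_le_of_lt (Nat.sub_le _ _) t.isLt⟩) (x t))

variable {k : ℕ}

lemma chainW_zero (μ : Fin k → ℝ) (Q : Fin k → Fin k → ℝ) (x : Fin 0 → Fin k) :
    chainW μ Q 0 x = 1 := by simp [chainW]

lemma chainW_cons (μ : Fin k → ℝ) (Q : Fin k → Fin k → ℝ) (n : ℕ) (i : Fin k)
    (x : Fin n → Fin k) :
    chainW μ Q (n + 1) (Fin.cons i x) = μ i * chainW (Q i) Q n x := by
  unfold chainW
  rw [Fin.prod_univ_succ]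
  congr 1
  · simp only [Fin.val_succ, Nat.add_sub_cancel, Nat.succ_ne_zero, if_false, Fin.cons_succ]
    refine Finset.prod_congr rfl fun t _ => ?_
    obtain ⟨tv, htv⟩ := t
    cases tv with
    | zero =>
      rw [if_pos rfl]
      simp
    | succ m =>
      rw [if_neg (Nat.succ_ne_zero m)]
      simp [Fin.cons, Fin.cases_succ']

lemma sum_cons {M : Type*} [AddCommMonoid M] (n : ℕ) (F : (Fin (n+1) → Fin k) → M) :
    ∑ x : Fin (n+1) → Fin k, F x = ∑ i : Fin k, ∑ x : Fin n → Fin k, F (Fin.cons i x) := by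
  rw [← (Fintype.sum_equiv (Fin.consEquiv fun _ => Fin k)
      (fun p : Fin k × (Fin n → Fin k) => F (Fin.cons p.1 p.2)) F fun p => rfl),
    Fintype.sum_prod_type]

lemma chainW_nonneg (μ : Fin k → ℝ) (Q : Fin k → Fin k → ℝ) (hμ : ∀ i, 0 ≤ μ i)
    (hQ : ∀ i j, 0 ≤ Q i j) (n : ℕ) (x : Fin n → Fin k) : 0 ≤ chainW μ Q n x := by
  refine Finset.prod_nonneg fun t _ => ?_
  split <;> [exact hμ _; exact hQ _ _]

lemma sum_chainW (n : ℕ) (μ : Fin k → ℝ) (Q : Fin k → Fin k → ℝ)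
    (hμ : inSimplex μ) (hQ : rowStochastic Q) :
    ∑ x : Fin n → Fin k, chainW μ Q n x = 1 := by
  induction n generalizing μ with
  | zero => simp [chainW]
  | succ n ih =>
    rw [sum_cons]
    have : ∀ i : Fin k, ∑ x : Fin n → Fin k, chainW μ Q (n+1) (Fin.cons i x) = μ i := by
      intro i
      simp only [chainW_cons, ← Finset.mul_sum, ih (Q i) (hQ i), mul_one]
    simp only [this]
    exact hμ.2

lemma le_matDist (Q Qt : Fin k → Fin k → ℝ) (i j : Fin k) :
    |Q i j - Qt i j| ≤ matDist Q Qt := by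
  have h1 : |Q i j - Qt i j| ≤ ⨆ j', |Q i j' - Qt i j'| :=
    le_ciSup (f := fun j' => |Q i j' - Qt i j'|) (Set.Finite.bddAbove (Set.finite_range _)) j
  exact h1.trans (le_ciSup (f := fun i' => ⨆ j', |Q i' j' - Qt i' j'|)
    (Set.Finite.bddAbove (Set.finite_range _)) i)

lemma matDist_nonneg (hk : 0 < k) (Q Qt : Fin k → Fin k → ℝ) : 0 ≤ matDist Q Qt := by
  have := le_matDist Q Qt ⟨0, hk⟩ ⟨0, hk⟩
  exact le_trans (abs_nonneg _) this

lemma chainW_tv (n : ℕ) (μ μt : Fin k → ℝ) (hμ : inSimplex μ) (hμt : inSimplex μt)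
    (Q Qt : Fin k → Fin k → ℝ) (hQ : rowStochastic Q) (hQt : rowStochastic Qt) :
    ∑ x : Fin (n+1) → Fin k, |chainW μ Q (n+1) x - chainW μt Qt (n+1) x|
      ≤ (∑ i, |μ i - μt i|) + (k : ℝ) * n * matDist Q Qt := by
  induction n generalizing μ μt with
  | zero =>
    rw [sum_cons]
    simp only [chainW_cons, chainW_zero, mul_one]
    simp
  | succ n ih =>
    rw [sum_cons]
    have key : ∀ i : Fin k,
        ∑ x : Fin n.succ → Fin k, |chainW μ Q (n+2) (Fin.cons i x) - chainW μt Qt (n+2) (Fin.cons i x)|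
          ≤ |μ i - μt i| + μt i * ((∑ j, |Q i j - Qt i j|) + (k : ℝ) * n * matDist Q Qt) := by
      intro i
      have hstep : ∀ x : Fin n.succ → Fin k,
          |chainW μ Q (n+2) (Fin.cons i x) - chainW μt Qt (n+2) (Fin.cons i x)|
            ≤ |μ i - μt i| * chainW (Q i) Q (n+1) x
              + μt i * |chainW (Q i) Q (n+1) x - chainW (Qt i) Qt (n+1) x| := by
        intro x
        rw [chainW_cons, chainW_cons]
        have : μ i * chainW (Q i) Q (n+1) x - μt i * chainW (Qt i) Qt (n+1) x
            = (μ i - μt i) * chainW (Q i) Q (n+1) x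
              + μt i * (chainW (Q i) Q (n+1) x - chainW (Qt i) Qt (n+1) x) := by ring
        rw [this]
        refine le_trans (abs_add_le _ _) ?_
        rw [abs_mul, abs_mul, abs_of_nonneg (chainW_nonneg _ _ (hQ i).1 (fun a b => (hQ a).1 b) _ x),
          abs_of_nonneg (hμt.1 i)]
      refine le_trans (Finset.sum_le_sum fun x _ => hstep x) ?_
      rw [Finset.sum_add_distrib, ← Finset.mul_sum, ← Finset.mul_sum,
        sum_chainW (n+1) (Q i) Q (hQ i) hQ, mul_one]
      exact add_le_add_right (mul_le_mul_of_nonneg_left (ih (Q i) (Qt i) (hQ i) (hQt i))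
        (hμt.1 i)) _
    refine le_trans (Finset.sum_le_sum fun i _ => key i) ?_
    rw [Finset.sum_add_distrib]
    have h2 : ∑ i, μt i * ((∑ j, |Q i j - Qt i j|) + (k : ℝ) * n * matDist Q Qt)
        ≤ ∑ i, μt i * ((k : ℝ) * matDist Q Qt + (k : ℝ) * n * matDist Q Qt) := by
      refine Finset.sum_le_sum fun i _ => ?_
      refine mul_le_mul_of_nonneg_left ?_ (hμt.1 i)
      gcongr
      calc ∑ j, |Q i j - Qt i j| ≤ ∑ _j : Fin k, matDist Q Qt :=
            Finset.sum_le_sum fun j _ => le_matDist Q Qt i j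
        _ = (k : ℝ) * matDist Q Qt := by simp [Finset.sum_const, mul_comm]
    refine le_trans (add_le_add_right h2 _) ?_
    rw [← Finset.sum_mul, hμt.2, one_mul]
    have : (k : ℝ) * matDist Q Qt + (k : ℝ) * n * matDist Q Qt
        = (k : ℝ) * (n.succ : ℝ) * matDist Q Qt := by push_cast; ring
    rw [this]

variable {d : ℕ} (lam : Measure (Fin d → ℝ)) [SigmaFinite lam]

lemma lintegral_pi_succ (n : ℕ) (G : (Fin d → ℝ) → (Fin n → (Fin d → ℝ)) → ℝ≥0∞)
    (hG : Measurable (fun p : (Fin d → ℝ) × (Fin n → (Fin d → ℝ)) => G p.1 p.2)) :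
    ∫⁻ y : Fin (n+1) → (Fin d → ℝ), G (y 0) (Fin.tail y) ∂(Measure.pi fun _ => lam)
      = ∫⁻ p : (Fin d → ℝ) × (Fin n → (Fin d → ℝ)), G p.1 p.2
          ∂(lam.prod (Measure.pi fun _ => lam)) := by
  have h := (measurePreserving_piFinSuccAbove (fun _ : Fin (n+1) => lam) 0).lintegral_comp hG
  rw [← h]
  refine lintegral_congr fun y => ?_
  simp [MeasurableEquiv.piFinSuccAbove, Fin.removeNth, Fin.zero_succAbove, Fin.tail]

lemma abs_mul_sub_le {a at' B Bt : ℝ} (ha : 0 ≤ a) (hBt : 0 ≤ Bt) :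
    |a * B - at' * Bt| ≤ |a - at'| * Bt + a * |B - Bt| := by
  have : a * B - at' * Bt = (a - at') * Bt + a * (B - Bt) := by ring
  rw [this]
  refine le_trans (abs_add_le _ _) ?_
  rw [abs_mul, abs_mul, abs_of_nonneg ha, abs_of_nonneg hBt]

lemma prodDens_lintegral (f : Fin k → (Fin d → ℝ) → ℝ) (hf : ∀ i, IsDensity lam (f i))
    (n : ℕ) (x : Fin n → Fin k) :
    ∫⁻ y : Fin n → (Fin d → ℝ), ENNReal.ofReal (∏ t, f (x t) (y t))
      ∂(Measure.pi fun _ => lam) = 1 := by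
  induction n with
  | zero => simp
  | succ n ih =>
    have hrw : ∀ y : Fin (n+1) → (Fin d → ℝ),
        ENNReal.ofReal (∏ t, f (x t) (y t))
          = ENNReal.ofReal (f (x 0) (y 0))
            * ENNReal.ofReal (∏ t : Fin n, f (x t.succ) (Fin.tail y t)) := by
      intro y
      rw [Fin.prod_univ_succ, ENNReal.ofReal_mul ((hf _).2.1 _)]
      rfl
    simp only [hrw]
    rw [lintegral_pi_succ lam n
      (fun a z => ENNReal.ofReal (f (x 0) a) * ENNReal.ofReal (∏ t : Fin n, f (x t.succ) (z t)))
      (((((hf _).1.comp measurable_fst).ennreal_ofReal).mul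
        ((Finset.measurable_prod _ fun t _ =>
          (hf _).1.comp ((measurable_pi_apply t).comp measurable_snd)).ennreal_ofReal)))]
    have hm1 : AEMeasurable (fun a : Fin d → ℝ => ENNReal.ofReal (f (x 0) a)) lam :=
      (hf _).1.ennreal_ofReal.aemeasurable
    have hm2 : AEMeasurable (fun z : Fin n → (Fin d → ℝ) =>
        ENNReal.ofReal (∏ t : Fin n, f (x t.succ) (z t))) (Measure.pi fun _ => lam) :=
      (Finset.measurable_prod _ fun t _ =>
        (hf _).1.comp (measurable_pi_apply t)).ennreal_ofReal.aemeasurable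
    rw [lintegral_prod_mul hm1 hm2]
    rw [(hf _).2.2, ih (fun t => x t.succ), one_mul]

lemma prodDens_diff (f ft : Fin k → (Fin d → ℝ) → ℝ)
    (hf : ∀ i, IsDensity lam (f i)) (hft : ∀ i, IsDensity lam (ft i))
    (n : ℕ) (x : Fin n → Fin k) :
    ∫⁻ y : Fin n → (Fin d → ℝ),
        ENNReal.ofReal |(∏ t, f (x t) (y t)) - ∏ t, ft (x t) (y t)|
        ∂(Measure.pi fun _ => lam)
      ≤ ∑ t : Fin n, ∫⁻ z, ENNReal.ofReal |f (x t) z - ft (x t) z| ∂lam := by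
  induction n with
  | zero => simp
  | succ n ih =>
    have hptwise : ∀ y : Fin (n+1) → (Fin d → ℝ),
        ENNReal.ofReal |(∏ t, f (x t) (y t)) - ∏ t, ft (x t) (y t)|
          ≤ ENNReal.ofReal |f (x 0) (y 0) - ft (x 0) (y 0)|
              * ENNReal.ofReal (∏ t : Fin n, ft (x t.succ) (Fin.tail y t))
            + ENNReal.ofReal (f (x 0) (y 0))
              * ENNReal.ofReal |(∏ t : Fin n, f (x t.succ) (Fin.tail y t))
                  - ∏ t : Fin n, ft (x t.succ) (Fin.tail y t)| := by
      intro y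
      rw [Fin.prod_univ_succ (f := fun t => f (x t) (y t)),
        Fin.prod_univ_succ (f := fun t => ft (x t) (y t))]
      rw [← ENNReal.ofReal_mul (abs_nonneg _), ← ENNReal.ofReal_mul ((hf _).2.1 _),
        ← ENNReal.ofReal_add (mul_nonneg (abs_nonneg _)
          (Finset.prod_nonneg fun t _ => (hft _).2.1 _))
          (mul_nonneg ((hf _).2.1 _) (abs_nonneg _))]
      refine ENNReal.ofReal_le_ofReal ?_
      exact abs_mul_sub_le ((hf _).2.1 _)
        (Finset.prod_nonneg fun t _ => (hft _).2.1 _)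
    refine le_trans (lintegral_mono hptwise) ?_
    have hmeas1 : Measurable fun a : Fin d → ℝ => ENNReal.ofReal |f (x 0) a - ft (x 0) a| :=
      (((hf _).1.sub (hft _).1).abs).ennreal_ofReal
    have hmeasP : Measurable fun z : Fin n → (Fin d → ℝ) =>
        ENNReal.ofReal (∏ t : Fin n, ft (x t.succ) (z t)) :=
      (Finset.measurable_prod _ fun t _ =>
        (hft _).1.comp (measurable_pi_apply t)).ennreal_ofReal
    have hmeasPd : Measurable fun z : Fin n → (Fin d → ℝ) =>
        ENNReal.ofReal |(∏ t : Fin n, f (x t.succ) (z t)) - ∏ t : Fin n, ft (x t.succ) (z t)| :=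
      (((Finset.measurable_prod _ fun t _ => (hf _).1.comp (measurable_pi_apply t)).sub
        (Finset.measurable_prod _ fun t _ =>
          (hft _).1.comp (measurable_pi_apply t))).abs).ennreal_ofReal
    have hA : Measurable fun p : (Fin d → ℝ) × (Fin n → (Fin d → ℝ)) =>
        ENNReal.ofReal |f (x 0) p.1 - ft (x 0) p.1|
          * ENNReal.ofReal (∏ t : Fin n, ft (x t.succ) (p.2 t)) :=
      (hmeas1.comp measurable_fst).mul (hmeasP.comp measurable_snd)
    have hB : Measurable fun p : (Fin d → ℝ) × (Fin n → (Fin d → ℝ)) =>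
        ENNReal.ofReal (f (x 0) p.1)
          * ENNReal.ofReal |(∏ t : Fin n, f (x t.succ) (p.2 t))
              - ∏ t : Fin n, ft (x t.succ) (p.2 t)| :=
      (((hf _).1.comp measurable_fst).ennreal_ofReal).mul (hmeasPd.comp measurable_snd)
    have key : ∫⁻ y : Fin (n+1) → (Fin d → ℝ),
        (ENNReal.ofReal |f (x 0) (y 0) - ft (x 0) (y 0)|
            * ENNReal.ofReal (∏ t : Fin n, ft (x t.succ) (Fin.tail y t))
          + ENNReal.ofReal (f (x 0) (y 0))
            * ENNReal.ofReal |(∏ t : Fin n, f (x t.succ) (Fin.tail y t))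
                - ∏ t : Fin n, ft (x t.succ) (Fin.tail y t)|) ∂(Measure.pi fun _ => lam)
        = ∫⁻ p : (Fin d → ℝ) × (Fin n → (Fin d → ℝ)),
            (ENNReal.ofReal |f (x 0) p.1 - ft (x 0) p.1|
                * ENNReal.ofReal (∏ t : Fin n, ft (x t.succ) (p.2 t))
              + ENNReal.ofReal (f (x 0) p.1)
                * ENNReal.ofReal |(∏ t : Fin n, f (x t.succ) (p.2 t))
                    - ∏ t : Fin n, ft (x t.succ) (p.2 t)|)
            ∂(lam.prod (Measure.pi fun _ => lam)) :=
      lintegral_pi_succ lam n (fun a z =>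
        ENNReal.ofReal |f (x 0) a - ft (x 0) a|
            * ENNReal.ofReal (∏ t : Fin n, ft (x t.succ) (z t))
          + ENNReal.ofReal (f (x 0) a)
            * ENNReal.ofReal |(∏ t : Fin n, f (x t.succ) (z t))
                - ∏ t : Fin n, ft (x t.succ) (z t)|) (hA.add hB)
    rw [key, lintegral_add_left hA]
    have hm1 : AEMeasurable (fun a : Fin d → ℝ =>
        ENNReal.ofReal |f (x 0) a - ft (x 0) a|) lam := hmeas1.aemeasurable
    have hm1' : AEMeasurable (fun a : Fin d → ℝ => ENNReal.ofReal (f (x 0) a)) lam :=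
      (hf _).1.ennreal_ofReal.aemeasurable
    rw [lintegral_prod_mul hm1 hmeasP.aemeasurable, lintegral_prod_mul hm1' hmeasPd.aemeasurable]
    rw [prodDens_lintegral lam ft hft n (fun t => x t.succ), mul_one, (hf _).2.2, one_mul]
    rw [Fin.sum_univ_succ (f := fun t => ∫⁻ z, ENNReal.ofReal |f (x t) z - ft (x t) z| ∂lam)]
    exact add_le_add_right (ih (fun t => x t.succ)) _

end Stmt7

theorem statement7_aux {k d : ℕ} (hk : 2 ≤ k)
    (lam : Measure (Fin d → ℝ)) [SigmaFinite lam]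
    (m : ℕ)
    (μ μt : Fin k → ℝ) (hμ : inSimplex μ) (hμt : inSimplex μt)
    (Q Qt : Fin k → Fin k → ℝ) (hQ : rowStochastic Q) (hQt : rowStochastic Qt)
    (f ft : Fin k → (Fin d → ℝ) → ℝ)
    (hf : ∀ i, IsDensity lam (f i)) (hft : ∀ i, IsDensity lam (ft i)) :
    ∫⁻ y : Fin (m+1) → (Fin d → ℝ),
        ENNReal.ofReal |(∑ x : Fin (m+1) → Fin k, Stmt7.chainW μ Q (m+1) x * ∏ t, f (x t) (y t))
          - ∑ x : Fin (m+1) → Fin k, Stmt7.chainW μt Qt (m+1) x * ∏ t, ft (x t) (y t)|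
        ∂(Measure.pi fun _ => lam)
      ≤ ENNReal.ofReal ((∑ i, |μ i - μt i|) + (k : ℝ) * (m : ℝ) * matDist Q Qt
          + ((m : ℝ) + 1) * ⨆ i, ∫ y, |f i y - ft i y| ∂lam) := by
  classical
  have hk0 : 0 < k := by omega
  set S := ⨆ i, ∫ y, |f i y - ft i y| ∂lam with hSdef
  set E : Fin k → ℝ≥0∞ := fun i => ∫⁻ z, ENNReal.ofReal |f i z - ft i z| ∂lam with hEdef
  -- S bounds
  have hbdd : BddAbove (Set.range fun i => ∫ y, |f i y - ft i y| ∂lam) :=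
    Set.Finite.bddAbove (Set.finite_range _)
  have hS0 : 0 ≤ S := le_trans (integral_nonneg fun y => abs_nonneg _)
    (le_ciSup hbdd (⟨0, hk0⟩ : Fin k))
  have hint : ∀ i : Fin k, Integrable (fun z => |f i z - ft i z|) lam := by
    intro i
    constructor
    · exact (((hf i).1.sub (hft i).1).abs).aestronglyMeasurable
    · rw [hasFiniteIntegral_iff_ofReal (ae_of_all _ fun z => abs_nonneg _)]
      have hb : ∀ z, ENNReal.ofReal |f i z - ft i z|
          ≤ ENNReal.ofReal (f i z) + ENNReal.ofReal (ft i z) := by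
        intro z
        rw [← ENNReal.ofReal_add ((hf i).2.1 z) ((hft i).2.1 z)]
        refine ENNReal.ofReal_le_ofReal ?_
        exact le_trans (abs_sub _ _) (by
          rw [abs_of_nonneg ((hf i).2.1 z), abs_of_nonneg ((hft i).2.1 z)])
      refine lt_of_le_of_lt (lintegral_mono hb) ?_
      rw [lintegral_add_left ((hf i).1.ennreal_ofReal), (hf i).2.2, (hft i).2.2]
      exact (by norm_num : (1 : ℝ≥0∞) + 1 < ⊤)
  have hE : ∀ i : Fin k, E i ≤ ENNReal.ofReal S := by
    intro i
    simp only [hEdef]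
    rw [← ofReal_integral_eq_lintegral_ofReal (hint i) (ae_of_all _ fun z => abs_nonneg _)]
    exact ENNReal.ofReal_le_ofReal (le_ciSup hbdd i)
  have hEsum : ∀ x : Fin (m+1) → Fin k,
      ∑ t : Fin (m+1), E (x t) ≤ ENNReal.ofReal (((m : ℝ) + 1) * S) := by
    intro x
    calc ∑ t : Fin (m+1), E (x t) ≤ ∑ _t : Fin (m+1), ENNReal.ofReal S :=
          Finset.sum_le_sum fun t _ => hE (x t)
      _ = (m+1 : ℕ) * ENNReal.ofReal S := by
          rw [Finset.sum_const, Finset.card_univ, Fintype.card_fin, nsmul_eq_mul]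
      _ = ENNReal.ofReal (((m : ℝ) + 1) * S) := by
          rw [ENNReal.ofReal_mul (by positivity)]
          congr 1
          rw [show ((m : ℝ) + 1) = ((m+1 : ℕ) : ℝ) by push_cast; ring, ENNReal.ofReal_natCast]
  -- nonnegativity facts
  have hc : ∀ x : Fin (m+1) → Fin k, 0 ≤ Stmt7.chainW μ Q (m+1) x :=
    fun x => Stmt7.chainW_nonneg μ Q hμ.1 (fun a b => (hQ a).1 b) _ x
  have hct : ∀ x : Fin (m+1) → Fin k, 0 ≤ Stmt7.chainW μt Qt (m+1) x :=
    fun x => Stmt7.chainW_nonneg μt Qt hμt.1 (fun a b => (hQt a).1 b) _ x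
  have hPt_nonneg : ∀ (x : Fin (m+1) → Fin k) (y : Fin (m+1) → Fin d → ℝ),
      0 ≤ ∏ t, ft (x t) (y t) := fun x y => Finset.prod_nonneg fun t _ => (hft _).2.1 _
  -- pointwise bound
  have hpt : ∀ y : Fin (m+1) → (Fin d → ℝ),
      ENNReal.ofReal |(∑ x : Fin (m+1) → Fin k, Stmt7.chainW μ Q (m+1) x * ∏ t, f (x t) (y t))
          - ∑ x : Fin (m+1) → Fin k, Stmt7.chainW μt Qt (m+1) x * ∏ t, ft (x t) (y t)|
        ≤ ∑ x : Fin (m+1) → Fin k,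
            (ENNReal.ofReal (|Stmt7.chainW μ Q (m+1) x - Stmt7.chainW μt Qt (m+1) x|
                * ∏ t, ft (x t) (y t))
              + ENNReal.ofReal (Stmt7.chainW μ Q (m+1) x
                * |(∏ t, f (x t) (y t)) - ∏ t, ft (x t) (y t)|)) := by
    intro y
    have h1 : |(∑ x : Fin (m+1) → Fin k, Stmt7.chainW μ Q (m+1) x * ∏ t, f (x t) (y t))
          - ∑ x : Fin (m+1) → Fin k, Stmt7.chainW μt Qt (m+1) x * ∏ t, ft (x t) (y t)|
        ≤ ∑ x : Fin (m+1) → Fin k,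
            (|Stmt7.chainW μ Q (m+1) x - Stmt7.chainW μt Qt (m+1) x| * ∏ t, ft (x t) (y t)
              + Stmt7.chainW μ Q (m+1) x * |(∏ t, f (x t) (y t)) - ∏ t, ft (x t) (y t)|) := by
      rw [← Finset.sum_sub_distrib]
      refine le_trans (Finset.abs_sum_le_sum_abs _ _) ?_
      exact Finset.sum_le_sum fun x _ => Stmt7.abs_mul_sub_le (hc x) (hPt_nonneg x y)
    refine le_trans (ENNReal.ofReal_le_ofReal h1) ?_
    rw [ENNReal.ofReal_sum_of_nonneg fun x _ => add_nonneg
      (mul_nonneg (abs_nonneg _) (hPt_nonneg x y)) (mul_nonneg (hc x) (abs_nonneg _))]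
    refine Finset.sum_le_sum fun x _ => ?_
    rw [ENNReal.ofReal_add (mul_nonneg (abs_nonneg _) (hPt_nonneg x y))
      (mul_nonneg (hc x) (abs_nonneg _))]
  refine le_trans (lintegral_mono hpt) ?_
  -- measurability of summands
  have hmeasPt : ∀ x : Fin (m+1) → Fin k, Measurable fun y : Fin (m+1) → (Fin d → ℝ) =>
      ENNReal.ofReal (|Stmt7.chainW μ Q (m+1) x - Stmt7.chainW μt Qt (m+1) x|
        * ∏ t, ft (x t) (y t)) := fun x =>
    ((measurable_const.mul (Finset.measurable_prod _ fun t _ =>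
      (hft _).1.comp (measurable_pi_apply t)))).ennreal_ofReal
  have hmeasPd : ∀ x : Fin (m+1) → Fin k, Measurable fun y : Fin (m+1) → (Fin d → ℝ) =>
      ENNReal.ofReal (Stmt7.chainW μ Q (m+1) x
        * |(∏ t, f (x t) (y t)) - ∏ t, ft (x t) (y t)|) := fun x =>
    ((measurable_const.mul (((Finset.measurable_prod _ fun t _ =>
      (hf _).1.comp (measurable_pi_apply t)).sub (Finset.measurable_prod _ fun t _ =>
      (hft _).1.comp (measurable_pi_apply t))).abs))).ennreal_ofReal
  rw [lintegral_finset_sum _ (f := fun (x : Fin (m+1) → Fin k) (y : Fin (m+1) → (Fin d → ℝ)) => ENNReal.ofReal (|Stmt7.chainW μ Q (m+1) x - Stmt7.chainW μt Qt (m+1) x|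
        * ∏ t, ft (x t) (y t)) + ENNReal.ofReal (Stmt7.chainW μ Q (m+1) x
        * |(∏ t, f (x t) (y t)) - ∏ t, ft (x t) (y t)|)) fun x _ => (hmeasPt x).add (hmeasPd x)]
  -- bound each summand's integral
  have hterm : ∀ x : Fin (m+1) → Fin k,
      ∫⁻ y : Fin (m+1) → (Fin d → ℝ),
          (ENNReal.ofReal (|Stmt7.chainW μ Q (m+1) x - Stmt7.chainW μt Qt (m+1) x|
              * ∏ t, ft (x t) (y t))
            + ENNReal.ofReal (Stmt7.chainW μ Q (m+1) x
              * |(∏ t, f (x t) (y t)) - ∏ t, ft (x t) (y t)|)) ∂(Measure.pi fun _ => lam)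
        ≤ ENNReal.ofReal |Stmt7.chainW μ Q (m+1) x - Stmt7.chainW μt Qt (m+1) x|
          + ENNReal.ofReal (Stmt7.chainW μ Q (m+1) x) * ENNReal.ofReal (((m : ℝ) + 1) * S) := by
    intro x
    rw [lintegral_add_left (hmeasPt x)]
    have e1 : ∫⁻ y : Fin (m+1) → (Fin d → ℝ),
        ENNReal.ofReal (|Stmt7.chainW μ Q (m+1) x - Stmt7.chainW μt Qt (m+1) x|
          * ∏ t, ft (x t) (y t)) ∂(Measure.pi fun _ => lam)
        = ENNReal.ofReal |Stmt7.chainW μ Q (m+1) x - Stmt7.chainW μt Qt (m+1) x| := by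
      have : ∀ y : Fin (m+1) → (Fin d → ℝ),
          ENNReal.ofReal (|Stmt7.chainW μ Q (m+1) x - Stmt7.chainW μt Qt (m+1) x|
            * ∏ t, ft (x t) (y t))
          = ENNReal.ofReal |Stmt7.chainW μ Q (m+1) x - Stmt7.chainW μt Qt (m+1) x|
            * ENNReal.ofReal (∏ t, ft (x t) (y t)) := fun y =>
        ENNReal.ofReal_mul (abs_nonneg _)
      simp only [this]
      have hPm : Measurable fun y : Fin (m+1) → (Fin d → ℝ) =>
          ENNReal.ofReal (∏ t, ft (x t) (y t)) :=
        (Finset.measurable_prod _ fun t _ =>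
          (hft _).1.comp (measurable_pi_apply t)).ennreal_ofReal
      rw [lintegral_const_mul _ hPm]
      rw [Stmt7.prodDens_lintegral lam ft hft (m+1) x, mul_one]
    have e2 : ∫⁻ y : Fin (m+1) → (Fin d → ℝ),
        ENNReal.ofReal (Stmt7.chainW μ Q (m+1) x
          * |(∏ t, f (x t) (y t)) - ∏ t, ft (x t) (y t)|) ∂(Measure.pi fun _ => lam)
        ≤ ENNReal.ofReal (Stmt7.chainW μ Q (m+1) x) * ENNReal.ofReal (((m : ℝ) + 1) * S) := by
      have : ∀ y : Fin (m+1) → (Fin d → ℝ),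
          ENNReal.ofReal (Stmt7.chainW μ Q (m+1) x
            * |(∏ t, f (x t) (y t)) - ∏ t, ft (x t) (y t)|)
          = ENNReal.ofReal (Stmt7.chainW μ Q (m+1) x)
            * ENNReal.ofReal |(∏ t, f (x t) (y t)) - ∏ t, ft (x t) (y t)| := fun y =>
        ENNReal.ofReal_mul (hc x)
      simp only [this]
      have hPm2 : Measurable fun y : Fin (m+1) → (Fin d → ℝ) =>
          ENNReal.ofReal |(∏ t, f (x t) (y t)) - ∏ t, ft (x t) (y t)| :=
        (((Finset.measurable_prod _ fun t _ =>
          (hf _).1.comp (measurable_pi_apply t)).sub (Finset.measurable_prod _ fun t _ =>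
          (hft _).1.comp (measurable_pi_apply t))).abs).ennreal_ofReal
      rw [lintegral_const_mul _ hPm2]
      refine mul_le_mul_right ?_ _
      exact le_trans (Stmt7.prodDens_diff lam f ft hf hft (m+1) x) (hEsum x)
    rw [e1]
    exact add_le_add_right e2 _
  refine le_trans (Finset.sum_le_sum fun x _ => hterm x) ?_
  rw [Finset.sum_add_distrib, ← Finset.sum_mul]
  have h3 : ∑ x : Fin (m+1) → Fin k,
      ENNReal.ofReal |Stmt7.chainW μ Q (m+1) x - Stmt7.chainW μt Qt (m+1) x|
      ≤ ENNReal.ofReal ((∑ i, |μ i - μt i|) + (k : ℝ) * (m : ℝ) * matDist Q Qt) := by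
    rw [← ENNReal.ofReal_sum_of_nonneg fun x _ => abs_nonneg _]
    exact ENNReal.ofReal_le_ofReal (Stmt7.chainW_tv m μ μt hμ hμt Q Qt hQ hQt)
  have h4 : ∑ x : Fin (m+1) → Fin k, ENNReal.ofReal (Stmt7.chainW μ Q (m+1) x) = 1 := by
    rw [← ENNReal.ofReal_sum_of_nonneg fun x _ => hc x,
      Stmt7.sum_chainW (m+1) μ Q hμ hQ, ENNReal.ofReal_one]
  rw [h4, one_mul]
  refine le_trans (add_le_add_left h3 _) ?_
  rw [← ENNReal.ofReal_add (add_nonneg (Finset.sum_nonneg fun i _ => abs_nonneg _)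
    (mul_nonneg (by positivity) (Stmt7.matDist_nonneg hk0 Q Qt))) (by positivity)]

lemma hmmJoint_eq {k d : ℕ} (μ : Fin k → ℝ) (Q : Fin k → Fin k → ℝ)
    (f : Fin k → (Fin d → ℝ) → ℝ) (n : ℕ) (y : Fin n → (Fin d → ℝ)) :
    hmmJoint μ Q f n y = ∑ x : Fin n → Fin k, Stmt7.chainW μ Q n x * ∏ t, f (x t) (y t) := by
  refine Finset.sum_congr rfl fun x _ => ?_
  rw [Stmt7.chainW, ← Finset.prod_mul_distrib]

/-- `L¹` bound between joint HMM densities in terms of the parameters. -/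
theorem statement7 (k d : ℕ) (hk : 2 ≤ k)
    (lam : Measure (Fin d → ℝ)) [SigmaFinite lam]
    (l : ℕ) (hl : 1 ≤ l)
    (μ μt : Fin k → ℝ) (hμ : inSimplex μ) (hμt : inSimplex μt)
    (Q Qt : Fin k → Fin k → ℝ) (hQ : rowStochastic Q) (hQt : rowStochastic Qt)
    (f ft : Fin k → (Fin d → ℝ) → ℝ)
    (hf : ∀ i, IsDensity lam (f i)) (hft : ∀ i, IsDensity lam (ft i)) :
    ∫⁻ y : Fin l → (Fin d → ℝ),
        ENNReal.ofReal |hmmJoint μ Q f l y - hmmJoint μt Qt ft l y|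
        ∂(Measure.pi fun _ => lam)
      ≤ ENNReal.ofReal ((∑ i, |μ i - μt i|) + (k : ℝ) * ((l : ℝ) - 1) * matDist Q Qt
          + (l : ℝ) * ⨆ i, ∫ y, |f i y - ft i y| ∂lam) := by
  obtain ⟨m, rfl⟩ : ∃ m, l = m + 1 := ⟨l - 1, by omega⟩
  have hcast1 : ((m + 1 : ℕ) : ℝ) - 1 = (m : ℝ) := by push_cast; ring
  have hcast2 : ((m + 1 : ℕ) : ℝ) = (m : ℝ) + 1 := by push_cast; ring
  simp only [hmmJoint_eq, hcast1, hcast2]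
  rw [show (m : ℝ) + 1 - 1 = (m : ℝ) by ring]
  exact statement7_aux hk lam m μ μt hμ hμt Q Qt hQ hQt f ft hf hft
end
end

section
/- Let q ∈ (0,1/k), Q, Q* ∈ Δ_k^k(q), μ, μ* ∈ Δ_k(q), f, f* ∈ F^k, and let y_1,…,y_{t−1} ∈ ℝ^d satisfy Σ_j f_j(y_s) > 0 and Σ_j f*_j(y_s) > 0 for all 1 ≤ s ≤ t−1. Let w_s and w*_s denote the prediction filters associated with (μ,Q,f) and (μ*,Q*,f*) respectively on y_{1:s−1}, and for 1 ≤ s ≤ t−1 set Δ_s = ‖Q−Q*‖/q + min( (1/q)·(Σ_i |f*_i(y_s) − f_i(y_s)| w*_{s,i})/(Σ_j f*_j(y_s) w*_{s,j}), k ). Then, with ρ = (1−kq)/(1−(k−1)q): Σ_{i=1}^k |w*_{t,i} − w_{t,i}| ≤ (2/ρ) Σ_{u=1}^{t−1} ρ^u Δ_{t−u} + 4ρ^{t−1}. -/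
open MeasureTheory Filter Real

noncomputable section

section Aux

variable {k : ℕ}

/-- normalization perturbation lemma -/
lemma sum_abs_norm (c e : Fin k → ℝ) (hc : ∀ i, 0 ≤ c i)
    (hSc : 0 < ∑ i, c i) (hSe : 0 < ∑ i, e i) :
    ∑ i, |c i / (∑ j, c j) - e i / (∑ j, e j)| ≤ 2 * (∑ i, |c i - e i|) / (∑ j, e j) := by
  set Sc := ∑ j, c j with hScdef
  set Se := ∑ j, e j with hSedef
  have h1 : ∀ i, |c i / Sc - e i / Se| ≤ |c i - e i| / Se + c i * |Se - Sc| / (Sc * Se) := by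
    intro i
    have hid : c i / Sc - e i / Se = (c i - e i) / Se + c i * (Se - Sc) / (Sc * Se) := by
      field_simp
      ring
    rw [hid]
    refine (abs_add_le _ _).trans ?_
    rw [abs_div, abs_div, abs_mul, abs_mul, abs_of_nonneg (hc i),
      abs_of_pos hSc, abs_of_pos hSe]
  have h2 : ∑ i, |c i / Sc - e i / Se| ≤
      (∑ i, |c i - e i|) / Se + Sc * |Se - Sc| / (Sc * Se) := by
    calc ∑ i, |c i / Sc - e i / Se| ≤ ∑ i, (|c i - e i| / Se + c i * |Se - Sc| / (Sc * Se)) :=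
          Finset.sum_le_sum fun i _ => h1 i
      _ = (∑ i, |c i - e i|) / Se + Sc * |Se - Sc| / (Sc * Se) := by
          rw [Finset.sum_add_distrib, ← Finset.sum_div, ← Finset.sum_div, ← Finset.sum_mul]
  have h3 : Sc * |Se - Sc| / (Sc * Se) = |Se - Sc| / Se := by
    field_simp
  have h4 : |Se - Sc| ≤ ∑ i, |c i - e i| := by
    have hid : Se - Sc = ∑ i, (e i - c i) := by rw [hScdef, hSedef, Finset.sum_sub_distrib]
    rw [hid]
    refine (Finset.abs_sum_le_sum_abs _ _).trans ?_
    simp [abs_sub_comm]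
  refine h2.trans ?_
  rw [h3, ← add_div, div_le_div_iff_of_pos_right hSe]
  linarith

end Aux
section Aux2

variable {k : ℕ}

lemma sigma_pos {q : ℝ} (hq0 : 0 < q) (hkq : (k : ℝ) * q < 1) :
    0 < 1 - ((k : ℝ) - 1) * q := by nlinarith

lemma rho_pos {q : ℝ} (hq0 : 0 < q) (hkq : (k : ℝ) * q < 1) : 0 < mixRho k q :=
  div_pos (by linarith) (sigma_pos hq0 hkq)

lemma rho_lt_one {q : ℝ} (hq0 : 0 < q) (hkq : (k : ℝ) * q < 1) : mixRho k q < 1 := by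
  rw [mixRho, div_lt_one (sigma_pos hq0 hkq)]
  nlinarith

lemma one_sub_rho {q : ℝ} (hq0 : 0 < q) (hkq : (k : ℝ) * q < 1) :
    1 - mixRho k q = q / (1 - ((k : ℝ) - 1) * q) := by
  have hσ := sigma_pos (k := k) hq0 hkq
  rw [mixRho, eq_div_iff hσ.ne', sub_mul, div_mul_cancel₀ _ hσ.ne']
  ring

/-- each entry of a row of a `q`-lower-bounded stochastic matrix is at most `1-(k-1)q`. -/
lemma row_entry_le {q : ℝ} {Q : Fin k → Fin k → ℝ} (hQ : rowStochasticGe q Q)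
    (j m : Fin k) (hk : 1 ≤ k) : Q j m ≤ 1 - ((k : ℝ) - 1) * q := by
  have hsum : ∑ i, Q j i = 1 := (hQ j).1.2
  have hrest : ((k : ℝ) - 1) * q ≤ ∑ i ∈ Finset.univ.erase m, Q j i := by
    have hcard : (Finset.univ.erase m).card = k - 1 := by
      rw [Finset.card_erase_of_mem (Finset.mem_univ m), Finset.card_univ, Fintype.card_fin]
    have := Finset.card_nsmul_le_sum (Finset.univ.erase m) (Q j) q
      (fun i _ => (hQ j).2 i)
    rw [hcard] at this
    have hcast : ((k - 1 : ℕ) : ℝ) = (k : ℝ) - 1 := by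
      rw [Nat.cast_sub hk]; norm_num
    simpa [nsmul_eq_mul, hcast] using this
  have : Q j m + ∑ i ∈ Finset.univ.erase m, Q j i = 1 := by
    rw [Finset.add_sum_erase _ _ (Finset.mem_univ m)] at *
    exact hsum
  linarith

/-- Dobrushin contraction from a Doeblin minorization. -/
lemma dobrushin_step {K : Fin k → Fin k → ℝ} {ν : Fin k → ℝ} {ε : ℝ}
    (hK : ∀ j, inSimplex (K j)) (hν : inSimplex ν) (hε0 : 0 ≤ ε) (hε1 : ε ≤ 1)
    (hmin : ∀ j i, ε * ν i ≤ K j i) (η : Fin k → ℝ) (hη : ∑ j, η j = 0) :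
    ∑ i, |∑ j, η j * K j i| ≤ (1 - ε) * ∑ j, |η j| := by
  have key : ∀ i, |∑ j, η j * K j i| ≤ ∑ j, |η j| * (K j i - ε * ν i) := by
    intro i
    have hrw : ∑ j, η j * K j i = ∑ j, η j * (K j i - ε * ν i) := by
      rw [Finset.sum_congr rfl (fun j _ => by ring : ∀ j ∈ Finset.univ,
        η j * (K j i - ε * ν i) = η j * K j i - η j * (ε * ν i))]
      rw [Finset.sum_sub_distrib, ← Finset.sum_mul, hη]
      ring
    rw [hrw]
    refine (Finset.abs_sum_le_sum_abs _ _).trans ?_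
    refine Finset.sum_le_sum fun j _ => ?_
    rw [abs_mul]
    exact mul_le_mul_of_nonneg_left (by rw [abs_of_nonneg (by linarith [hmin j i])])
      (abs_nonneg _)
  calc ∑ i, |∑ j, η j * K j i| ≤ ∑ i, ∑ j, |η j| * (K j i - ε * ν i) :=
        Finset.sum_le_sum fun i _ => key i
    _ = ∑ j, |η j| * (1 - ε) := by
        rw [Finset.sum_comm]
        refine Finset.sum_congr rfl fun j _ => ?_
        have hmu : ∑ i, |η j| * (K j i - ε * ν i) = |η j| * ∑ i, (K j i - ε * ν i) :=
          (Finset.mul_sum _ _ _).symm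
        rw [hmu, Finset.sum_sub_distrib, (hK j).2, ← Finset.mul_sum, hν.2]
        ring
    _ = (1 - ε) * ∑ j, |η j| := by
        rw [Finset.mul_sum]
        exact Finset.sum_congr rfl fun j _ => mul_comm _ _

end Aux2
section Aux3

variable {k d : ℕ} {q : ℝ} {Q : Fin k → Fin k → ℝ} {f : Fin k → (Fin d → ℝ) → ℝ}

lemma step_den_pos {w g : Fin k → ℝ} (hq0 : 0 < q) (hw : ∀ j, q ≤ w j)
    (hg : ∀ j, 0 ≤ g j) (hgs : 0 < ∑ j, g j) : 0 < ∑ j, w j * g j := by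
  calc (0 : ℝ) < q * ∑ j, g j := by positivity
    _ = ∑ j, q * g j := Finset.mul_sum _ _ _
    _ ≤ ∑ j, w j * g j :=
        Finset.sum_le_sum fun j _ => mul_le_mul_of_nonneg_right (hw j) (hg j)

lemma step_mem (hq0 : 0 < q) (hQ : rowStochasticGe q Q) {w g : Fin k → ℝ}
    (hw : inSimplexGe q w) (hg : ∀ j, 0 ≤ g j) (hgs : 0 < ∑ j, g j) :
    inSimplexGe q (fun i => (∑ j, w j * Q j i * g j) / (∑ j, w j * g j)) := by
  have hden : 0 < ∑ j, w j * g j := step_den_pos hq0 hw.2 hg hgs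
  have hwnn : ∀ j, 0 ≤ w j := fun j => le_trans hq0.le (hw.2 j)
  have hentry : ∀ i, q ≤ (∑ j, w j * Q j i * g j) / (∑ j, w j * g j) := by
    intro i
    rw [le_div_iff₀ hden, Finset.mul_sum]
    refine Finset.sum_le_sum fun j _ => ?_
    have : q * (w j * g j) = w j * q * g j := by ring
    rw [this]
    exact mul_le_mul_of_nonneg_right
      (mul_le_mul_of_nonneg_left ((hQ j).2 i) (hwnn j)) (hg j)
  refine ⟨⟨fun i => le_trans hq0.le (hentry i), ?_⟩, hentry⟩
  rw [← Finset.sum_div, div_eq_one_iff_eq (ne_of_gt hden), Finset.sum_comm]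
  refine Finset.sum_congr rfl fun j _ => ?_
  calc ∑ i, w j * Q j i * g j = w j * g j * ∑ i, Q j i := by
        rw [Finset.mul_sum]; exact Finset.sum_congr rfl fun i _ => by ring
    _ = w j * g j := by rw [(hQ j).1.2, mul_one]

lemma predFilter_mem (hq0 : 0 < q) (hQ : rowStochasticGe q Q)
    (hf0 : ∀ j x, 0 ≤ f j x) {μ : Fin k → ℝ} (hμ : inSimplexGe q μ) (y : ℕ → (Fin d → ℝ)) :
    ∀ n, (∀ s, s < n → 0 < ∑ j, f j (y s)) → inSimplexGe q (predFilter μ Q f y n) := by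
  intro n
  induction n with
  | zero => intro _; exact hμ
  | succ m ih =>
      intro hpos
      have hm := ih fun s hs => hpos s (hs.trans (Nat.lt_succ_self m))
      exact step_mem hq0 hQ hm (fun j => hf0 j (y m)) (hpos m (Nat.lt_succ_self m))

lemma predFilter_shift (μ : Fin k → ℝ) (y : ℕ → (Fin d → ℝ)) :
    ∀ n, predFilter μ Q f y (n + 1) =
      predFilter (predFilter μ Q f y 1) Q f (fun u => y (u + 1)) n := by
  intro n
  induction n with
  | zero => rfl
  | succ m ih =>
      show (fun i => (∑ j, predFilter μ Q f y (m + 1) j * Q j i * f j (y (m + 1))) /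
          (∑ j, predFilter μ Q f y (m + 1) j * f j (y (m + 1)))) = _
      rw [ih]
      rfl

end Aux3
section Aux4

variable {k d : ℕ} {q : ℝ} {Q : Fin k → Fin k → ℝ} {f : Fin k → (Fin d → ℝ) → ℝ}

lemma repr_lemma (hk1 : 1 ≤ k) (hq0 : 0 < q) (hkq : (k : ℝ) * q < 1)
    (hQ : rowStochasticGe q Q) (hf0 : ∀ j x, 0 ≤ f j x) :
    ∀ (n : ℕ) (y : ℕ → (Fin d → ℝ)), (∀ s, s < n → 0 < ∑ j, f j (y s)) →
    ∃ (β : Fin k → ℝ) (K : Fin k → Fin k → ℝ),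
      (∀ j, 0 ≤ β j) ∧ (0 < ∑ j, β j) ∧
      (∀ u v : Fin k → ℝ, (∑ j, u j) = (∑ j, v j) →
        ∑ i, |(∑ j, u j * K j i) - (∑ j, v j * K j i)| ≤
          mixRho k q ^ n * ∑ j, |u j - v j|) ∧
      (∀ a : Fin k → ℝ, inSimplexGe q a → ∀ i,
        predFilter a Q f y n i * (∑ j, a j * β j) = ∑ j, a j * β j * K j i) := by
  intro n
  induction n with
  | zero =>
      intro y _
      refine ⟨fun _ => 1, fun j i => if j = i then 1 else 0, fun _ => zero_le_one, ?_, ?_, ?_⟩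
      · simp only [Finset.sum_const, Finset.card_univ, Fintype.card_fin, nsmul_eq_mul, mul_one]
        exact_mod_cast Nat.lt_of_lt_of_le Nat.zero_lt_one hk1
      · intro u v _
        have hid : ∀ w : Fin k → ℝ, ∀ i, (∑ j, w j * if j = i then 1 else 0) = w i := by
          intro w i; simp
        simp only [hid, pow_zero, one_mul]
        exact le_refl _
      · intro a ha i
        have hid : (∑ j, a j * 1 * if j = i then 1 else 0) = a i := by simp
        have h1 : (∑ j, a j * 1) = 1 := by simpa using ha.1.2
        rw [hid, h1, mul_one]
        rfl
  | succ n ih =>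
      intro y hpos
      obtain ⟨β', K', hβ'0, hβ'sum, hK'contr, hK'repr⟩ :=
        ih (fun u => y (u + 1)) (fun s hs => hpos (s + 1) (by omega))
      set σ := 1 - ((k : ℝ) - 1) * q with hσdef
      have hσ : 0 < σ := sigma_pos hq0 hkq
      have hρ0 := rho_pos hq0 hkq
      have hρ1 := rho_lt_one hq0 hkq
      set g : Fin k → ℝ := fun j => f j (y 0) with hgdef
      have hg0 : ∀ j, 0 ≤ g j := fun j => hf0 j (y 0)
      have hgs : 0 < ∑ j, g j := hpos 0 (Nat.succ_pos n)
      set B' := ∑ l, β' l with hB'def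
      set D : Fin k → ℝ := fun j => ∑ l, Q j l * β' l with hDdef
      have hDge : ∀ j, q * B' ≤ D j := by
        intro j
        rw [hB'def, Finset.mul_sum]
        exact Finset.sum_le_sum fun l _ =>
          mul_le_mul_of_nonneg_right ((hQ j).2 l) (hβ'0 l)
      have hD : ∀ j, 0 < D j := fun j => lt_of_lt_of_le (by positivity) (hDge j)
      have hDle : ∀ j, D j ≤ σ * B' := by
        intro j
        rw [hB'def, Finset.mul_sum]
        exact Finset.sum_le_sum fun l _ =>
          mul_le_mul_of_nonneg_right (row_entry_le hQ j l hk1) (hβ'0 l)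
      set β : Fin k → ℝ := fun j => g j * D j with hβdef
      set K₀ : Fin k → Fin k → ℝ := fun j l => Q j l * β' l / D j with hK₀def
      set K : Fin k → Fin k → ℝ := fun j i => ∑ l, K₀ j l * K' l i with hKdef
      have hK₀nn : ∀ j l, 0 ≤ K₀ j l :=
        fun j l => div_nonneg (mul_nonneg (le_trans hq0.le ((hQ j).2 l)) (hβ'0 l)) (hD j).le
      have hK₀row : ∀ j, ∑ l, K₀ j l = 1 := by
        intro j
        rw [hK₀def]
        simp only
        rw [← Finset.sum_div, div_eq_one_iff_eq (ne_of_gt (hD j))]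
      have hmin : ∀ j l, (1 - mixRho k q) * (β' l / B') ≤ K₀ j l := by
        intro j l
        have h1 : (1 - mixRho k q) * (β' l / B') = q * β' l / (σ * B') := by
          rw [one_sub_rho hq0 hkq, ← hσdef, div_mul_div_comm]
        rw [h1]
        exact div_le_div₀ (mul_nonneg (le_trans hq0.le ((hQ j).2 l)) (hβ'0 l))
          (mul_le_mul_of_nonneg_right ((hQ j).2 l) (hβ'0 l)) (hD j) (hDle j)
      have hswap : ∀ (w : Fin k → ℝ) (i : Fin k),
          (∑ j, w j * K j i) = ∑ l, (∑ j, w j * K₀ j l) * K' l i := by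
        intro w i
        calc (∑ j, w j * K j i) = ∑ j, ∑ l, w j * K₀ j l * K' l i := by
              refine Finset.sum_congr rfl fun j _ => ?_
              rw [hKdef]
              simp only
              rw [Finset.mul_sum]
              exact Finset.sum_congr rfl fun l _ => by ring
          _ = ∑ l, ∑ j, w j * K₀ j l * K' l i := Finset.sum_comm
          _ = ∑ l, (∑ j, w j * K₀ j l) * K' l i := by
              refine Finset.sum_congr rfl fun l _ => ?_
              rw [Finset.sum_mul]
      refine ⟨β, K, fun j => mul_nonneg (hg0 j) (hD j).le, ?_, ?_, ?_⟩
      · calc (0 : ℝ) < q * B' * ∑ j, g j := by positivity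
          _ = ∑ j, g j * (q * B') := by rw [← Finset.sum_mul]; ring
          _ ≤ ∑ j, β j := Finset.sum_le_sum fun j _ =>
              mul_le_mul_of_nonneg_left (hDge j) (hg0 j)
      · -- contraction
        intro u v huv
        have hrow : ∀ w : Fin k → ℝ, (∑ l, ∑ j, w j * K₀ j l) = ∑ j, w j := by
          intro w
          rw [Finset.sum_comm]
          refine Finset.sum_congr rfl fun j _ => ?_
          rw [← Finset.mul_sum, hK₀row j, mul_one]
        have hcontr' := hK'contr (fun l => ∑ j, u j * K₀ j l) (fun l => ∑ j, v j * K₀ j l)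
          (by rw [hrow, hrow, huv])
        have hdob : (∑ l, |(∑ j, u j * K₀ j l) - ∑ j, v j * K₀ j l|) ≤
            mixRho k q * ∑ j, |u j - v j| := by
          have hη : ∑ j, (u j - v j) = 0 := by rw [Finset.sum_sub_distrib, huv, sub_self]
          have hd := dobrushin_step (K := K₀) (ν := fun l => β' l / B') (ε := 1 - mixRho k q)
            (fun j => ⟨hK₀nn j, hK₀row j⟩)
            ⟨fun l => div_nonneg (hβ'0 l) (by positivity),
              by rw [← Finset.sum_div, div_self (ne_of_gt hβ'sum)]⟩
            (by linarith) (by linarith) hmin (fun j => u j - v j) hη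
        -- rewrite (∑ j, (u j - v j) * K₀ j l) as difference of sums
          have hdiff : ∀ l, (∑ j, (u j - v j) * K₀ j l) =
              (∑ j, u j * K₀ j l) - ∑ j, v j * K₀ j l := by
            intro l
            rw [← Finset.sum_sub_distrib]
            exact Finset.sum_congr rfl fun j _ => by ring
          simp only [hdiff] at hd
          calc (∑ l, |(∑ j, u j * K₀ j l) - ∑ j, v j * K₀ j l|) ≤
                (1 - (1 - mixRho k q)) * ∑ j, |u j - v j| := hd
            _ = mixRho k q * ∑ j, |u j - v j| := by ring_nf
        calc ∑ i, |(∑ j, u j * K j i) - ∑ j, v j * K j i|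
            = ∑ i, |(∑ l, (∑ j, u j * K₀ j l) * K' l i) -
                ∑ l, (∑ j, v j * K₀ j l) * K' l i| := by
              refine Finset.sum_congr rfl fun i _ => ?_
              rw [hswap u i, hswap v i]
          _ ≤ mixRho k q ^ n * ∑ l, |(∑ j, u j * K₀ j l) - ∑ j, v j * K₀ j l| := hcontr'
          _ ≤ mixRho k q ^ n * (mixRho k q * ∑ j, |u j - v j|) :=
              mul_le_mul_of_nonneg_left hdob (pow_nonneg hρ0.le n)
          _ = mixRho k q ^ (n + 1) * ∑ j, |u j - v j| := by rw [pow_succ]; ring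
      · -- representation
        intro a ha i
        have hS : 0 < ∑ j, a j * g j := step_den_pos hq0 ha.2 hg0 hgs
        set S := ∑ j, a j * g j with hSdef
        have ha₁ : predFilter a Q f y 1 = fun l => (∑ j, a j * Q j l * g j) / S := rfl
        have ha₁mem : inSimplexGe q (predFilter a Q f y 1) := by
          rw [ha₁]
          exact step_mem hq0 hQ ha hg0 hgs
        set a₁ := predFilter a Q f y 1 with ha₁def
        have ha₁S : ∀ l, a₁ l * S = ∑ j, a j * Q j l * g j := by
          intro l
          rw [ha₁]
          exact div_mul_cancel₀ _ (ne_of_gt hS)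
        have hA : (∑ l, a₁ l * β' l) * S = ∑ j, a j * β j := by
          calc (∑ l, a₁ l * β' l) * S = ∑ l, a₁ l * S * β' l := by
                rw [Finset.sum_mul]
                exact Finset.sum_congr rfl fun l _ => by ring
            _ = ∑ l, ∑ j, a j * Q j l * g j * β' l := by
                refine Finset.sum_congr rfl fun l _ => ?_
                rw [ha₁S l, Finset.sum_mul]
            _ = ∑ j, ∑ l, a j * Q j l * g j * β' l := Finset.sum_comm
            _ = ∑ j, a j * β j := by
                refine Finset.sum_congr rfl fun j _ => ?_
                calc ∑ l, a j * Q j l * g j * β' l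
                    = ∑ l, a j * g j * (Q j l * β' l) := by
                      exact Finset.sum_congr rfl fun l _ => by ring
                  _ = a j * g j * D j := by rw [← Finset.mul_sum]
                  _ = a j * β j := by rw [hβdef]; ring
        have hβK₀ : ∀ j l, β j * K₀ j l = g j * (Q j l * β' l) := by
          intro j l
          rw [hβdef, hK₀def]
          simp only
          field_simp [(hD j).ne']
        have hB : (∑ l, a₁ l * β' l * K' l i) * S = ∑ j, a j * β j * K j i := by
          calc (∑ l, a₁ l * β' l * K' l i) * S = ∑ l, a₁ l * S * β' l * K' l i := by
                rw [Finset.sum_mul]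
                exact Finset.sum_congr rfl fun l _ => by ring
            _ = ∑ l, ∑ j, a j * Q j l * g j * β' l * K' l i := by
                refine Finset.sum_congr rfl fun l _ => ?_
                rw [ha₁S l, Finset.sum_mul, Finset.sum_mul]
            _ = ∑ j, ∑ l, a j * Q j l * g j * β' l * K' l i := Finset.sum_comm
            _ = ∑ j, a j * β j * K j i := by
                refine Finset.sum_congr rfl fun j _ => ?_
                rw [hKdef]
                simp only
                rw [Finset.mul_sum]
                refine Finset.sum_congr rfl fun l _ => ?_
                have : a j * (β j * K₀ j l) * K' l i = a j * β j * (K₀ j l * K' l i) := by ring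
                rw [← this, hβK₀ j l]
                ring
        have hrepr' := hK'repr a₁ ha₁mem i
        have hshift : predFilter a Q f y (n + 1) i = predFilter a₁ Q f (fun u => y (u + 1)) n i := by
          rw [predFilter_shift a y n, ha₁def]
        calc predFilter a Q f y (n + 1) i * ∑ j, a j * β j
            = predFilter a₁ Q f (fun u => y (u + 1)) n i * ((∑ l, a₁ l * β' l) * S) := by
              rw [hshift, hA]
          _ = (predFilter a₁ Q f (fun u => y (u + 1)) n i * ∑ l, a₁ l * β' l) * S := by ring
          _ = (∑ l, a₁ l * β' l * K' l i) * S := by rw [hrepr']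
          _ = ∑ j, a j * β j * K j i := hB

end Aux4
section Aux5

variable {k d : ℕ} {q : ℝ} {Q : Fin k → Fin k → ℝ} {f : Fin k → (Fin d → ℝ) → ℝ}

lemma forget (hk1 : 1 ≤ k) (hq0 : 0 < q) (hkq : (k : ℝ) * q < 1)
    (hQ : rowStochasticGe q Q) (hf0 : ∀ j x, 0 ≤ f j x)
    (n : ℕ) (y : ℕ → (Fin d → ℝ)) (hpos : ∀ s, s < n → 0 < ∑ j, f j (y s))
    {a b : Fin k → ℝ} (ha : inSimplexGe q a) (hb : inSimplexGe q b)
    (C : ℝ) (hC : ∀ j, |a j - b j| ≤ C) :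
    ∑ i, |predFilter a Q f y n i - predFilter b Q f y n i| ≤
      mixRho k q ^ n * min 2 (2 * C / q) := by
  obtain ⟨β, K, hβ0, hβsum, hcontr, hrepr⟩ := repr_lemma hk1 hq0 hkq hQ hf0 n y hpos
  have hTa : 0 < ∑ j, a j * β j := by
    calc (0 : ℝ) < q * ∑ j, β j := by positivity
      _ = ∑ j, q * β j := Finset.mul_sum _ _ _
      _ ≤ ∑ j, a j * β j :=
        Finset.sum_le_sum fun j _ => mul_le_mul_of_nonneg_right (ha.2 j) (hβ0 j)
  have hTb : 0 < ∑ j, b j * β j := by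
    calc (0 : ℝ) < q * ∑ j, β j := by positivity
      _ = ∑ j, q * β j := Finset.mul_sum _ _ _
      _ ≤ ∑ j, b j * β j :=
        Finset.sum_le_sum fun j _ => mul_le_mul_of_nonneg_right (hb.2 j) (hβ0 j)
  set Ta := ∑ j, a j * β j with hTadef
  set Tb := ∑ j, b j * β j with hTbdef
  set u : Fin k → ℝ := fun j => a j * β j / Ta with hudef
  set v : Fin k → ℝ := fun j => b j * β j / Tb with hvdef
  have hfa : ∀ i, predFilter a Q f y n i = ∑ j, u j * K j i := by
    intro i
    have h := hrepr a ha i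
    rw [eq_comm, ← div_eq_iff (ne_of_gt hTa)] at h
    rw [← h, Finset.sum_div]
    exact Finset.sum_congr rfl fun j _ => (div_mul_eq_mul_div _ _ _).symm
  have hfb : ∀ i, predFilter b Q f y n i = ∑ j, v j * K j i := by
    intro i
    have h := hrepr b hb i
    rw [eq_comm, ← div_eq_iff (ne_of_gt hTb)] at h
    rw [← h, Finset.sum_div]
    exact Finset.sum_congr rfl fun j _ => (div_mul_eq_mul_div _ _ _).symm
  have husum : ∑ j, u j = 1 := by
    rw [hudef]
    simp only
    rw [← Finset.sum_div, div_self (ne_of_gt hTa)]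
  have hvsum : ∑ j, v j = 1 := by
    rw [hvdef]
    simp only
    rw [← Finset.sum_div, div_self (ne_of_gt hTb)]
  have hunn : ∀ j, 0 ≤ u j := fun j =>
    div_nonneg (mul_nonneg (le_trans hq0.le (ha.2 j)) (hβ0 j)) hTa.le
  have hvnn : ∀ j, 0 ≤ v j := fun j =>
    div_nonneg (mul_nonneg (le_trans hq0.le (hb.2 j)) (hβ0 j)) hTb.le
  have hmain : ∑ i, |predFilter a Q f y n i - predFilter b Q f y n i| ≤
      mixRho k q ^ n * ∑ j, |u j - v j| := by
    have := hcontr u v (by rw [husum, hvsum])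
    calc ∑ i, |predFilter a Q f y n i - predFilter b Q f y n i|
        = ∑ i, |(∑ j, u j * K j i) - ∑ j, v j * K j i| := by
          refine Finset.sum_congr rfl fun i _ => ?_
          rw [hfa i, hfb i]
      _ ≤ mixRho k q ^ n * ∑ j, |u j - v j| := this
  have hb1 : ∑ j, |u j - v j| ≤ 2 := by
    calc ∑ j, |u j - v j| ≤ ∑ j, (u j + v j) := by
          refine Finset.sum_le_sum fun j _ => ?_
          refine (abs_sub _ _).trans ?_
          rw [abs_of_nonneg (hunn j), abs_of_nonneg (hvnn j)]
      _ = 2 := by rw [Finset.sum_add_distrib, husum, hvsum]; norm_num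
  have hC0 : 0 ≤ C := le_trans (abs_nonneg _) (hC ⟨0, hk1⟩)
  have hb2 : ∑ j, |u j - v j| ≤ 2 * C / q := by
    have hnorm := sum_abs_norm (fun j => b j * β j) (fun j => a j * β j)
      (fun j => mul_nonneg (le_trans hq0.le (hb.2 j)) (hβ0 j)) hTb hTa
    have heq : ∑ j, |u j - v j| = ∑ j, |b j * β j / Tb - a j * β j / Ta| := by
      refine Finset.sum_congr rfl fun j _ => ?_
      rw [hudef, hvdef]
      simp only
      rw [abs_sub_comm]
    rw [heq]
    refine hnorm.trans ?_
    have hnum : 2 * (∑ j, |b j * β j - a j * β j|) ≤ 2 * (C * ∑ j, β j) := by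
      have : ∀ j, |b j * β j - a j * β j| ≤ C * β j := by
        intro j
        have : b j * β j - a j * β j = (b j - a j) * β j := by ring
        rw [this, abs_mul, abs_of_nonneg (hβ0 j)]
        exact mul_le_mul_of_nonneg_right (by rw [abs_sub_comm]; exact hC j) (hβ0 j)
      calc 2 * (∑ j, |b j * β j - a j * β j|) ≤ 2 * ∑ j, C * β j := by
            have := Finset.sum_le_sum fun j (_ : j ∈ Finset.univ) => this j
            linarith
        _ = 2 * (C * ∑ j, β j) := by rw [← Finset.mul_sum]
    have hden : q * ∑ j, β j ≤ Ta := by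
      rw [hTadef, Finset.mul_sum]
      exact Finset.sum_le_sum fun j _ => mul_le_mul_of_nonneg_right (ha.2 j) (hβ0 j)
    calc 2 * (∑ j, |b j * β j - a j * β j|) / Ta ≤
          2 * (C * ∑ j, β j) / (q * ∑ j, β j) := by
          refine div_le_div₀ (by positivity) hnum (by positivity) hden
      _ = 2 * C / q := by
          rw [mul_comm q (∑ j, β j), show 2 * (C * ∑ j, β j) = (∑ j, β j) * (2 * C) by ring,
            mul_div_mul_left _ _ (ne_of_gt hβsum)]
  refine hmain.trans (mul_le_mul_of_nonneg_left (le_min hb1 hb2)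
    (pow_nonneg (rho_pos hq0 hkq).le n))

end Aux5
section Aux6

variable {k : ℕ}

lemma matDist_nonneg (Q Qs : Fin k → Fin k → ℝ) (hk1 : 1 ≤ k) : 0 ≤ matDist Q Qs := by
  have : Nonempty (Fin k) := ⟨⟨0, hk1⟩⟩
  exact Real.iSup_nonneg fun i => Real.iSup_nonneg fun j => abs_nonneg _

lemma matDist_le (Q Qs : Fin k → Fin k → ℝ) (i j : Fin k) :
    |Q i j - Qs i j| ≤ matDist Q Qs := by
  have : Nonempty (Fin k) := ⟨i⟩
  refine le_trans (le_ciSup (f := fun j => |Q i j - Qs i j|)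
    (Set.Finite.bddAbove (Set.finite_range _)) j) ?_
  exact le_ciSup (f := fun i => ⨆ j, |Q i j - Qs i j|)
    (Set.Finite.bddAbove (Set.finite_range _)) i

lemma abs_sum_le_half (c η : Fin k → ℝ) (hc0 : ∀ j, 0 ≤ c j) (hc1 : ∀ j, c j ≤ 1)
    (hη : ∑ j, η j = 0) : |∑ j, c j * η j| ≤ (∑ j, |η j|) / 2 := by
  have hrw : ∑ j, c j * η j = ∑ j, (c j - 1/2) * η j := by
    rw [Finset.sum_congr rfl (fun j _ => by ring : ∀ j ∈ Finset.univ,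
      (c j - 1/2) * η j = c j * η j - (1/2) * η j), Finset.sum_sub_distrib,
      ← Finset.mul_sum, hη]
    ring
  rw [hrw]
  refine (Finset.abs_sum_le_sum_abs _ _).trans ?_
  rw [Finset.sum_div]
  refine Finset.sum_le_sum fun j _ => ?_
  rw [abs_mul]
  have hc : |c j - 1/2| ≤ 1/2 := by
    rw [abs_le]
    constructor <;> [linarith [hc0 j]; linarith [hc1 j]]
  calc |c j - 1/2| * |η j| ≤ 1/2 * |η j| :=
        mul_le_mul_of_nonneg_right hc (abs_nonneg _)
    _ = |η j| / 2 := by ring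

lemma step_diff {q : ℝ} (hq0 : 0 < q) {Q Qs : Fin k → Fin k → ℝ}
    (hQ : rowStochasticGe q Q) (hQs : rowStochasticGe q Qs)
    {w g gs : Fin k → ℝ} (hw : inSimplexGe q w)
    (hg : ∀ j, 0 ≤ g j) (hgs : ∀ j, 0 ≤ gs j)
    (hgp : 0 < ∑ j, g j) (hgsp : 0 < ∑ j, gs j) (i : Fin k) :
    |(∑ j, w j * Qs j i * gs j) / (∑ j, w j * gs j) -
      (∑ j, w j * Q j i * g j) / (∑ j, w j * g j)| ≤
      matDist Q Qs + min ((∑ l, |gs l - g l| * w l) / (∑ j, gs j * w j)) 1 := by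
  have hk1 : 1 ≤ k := by
    rcases Nat.eq_zero_or_pos k with h | h
    · exfalso; subst h; simp at hgp
    · exact h
  have hS : 0 < ∑ j, w j * g j := step_den_pos hq0 hw.2 hg hgp
  have hSs : 0 < ∑ j, w j * gs j := step_den_pos hq0 hw.2 hgs hgsp
  set S := ∑ j, w j * g j with hSdef
  set Ss := ∑ j, w j * gs j with hSsdef
  have hwnn : ∀ j, 0 ≤ w j := fun j => le_trans hq0.le (hw.2 j)
  set u : Fin k → ℝ := fun j => w j * g j / S with hudef
  set us : Fin k → ℝ := fun j => w j * gs j / Ss with husdef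
  have husum : ∑ j, u j = 1 := by
    rw [hudef]; simp only; rw [← Finset.sum_div, div_self (ne_of_gt hS)]
  have hussum : ∑ j, us j = 1 := by
    rw [husdef]; simp only; rw [← Finset.sum_div, div_self (ne_of_gt hSs)]
  have hunn : ∀ j, 0 ≤ u j := fun j => div_nonneg (mul_nonneg (hwnn j) (hg j)) hS.le
  have husnn : ∀ j, 0 ≤ us j := fun j => div_nonneg (mul_nonneg (hwnn j) (hgs j)) hSs.le
  set b := ∑ j, us j * Q j i with hbdef
  have hterm1 : |(∑ j, w j * Qs j i * gs j) / Ss - b| ≤ matDist Q Qs := by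
    have hrw : (∑ j, w j * Qs j i * gs j) / Ss - b = ∑ j, us j * (Qs j i - Q j i) := by
      rw [hbdef, Finset.sum_div, ← Finset.sum_sub_distrib]
      refine Finset.sum_congr rfl fun j _ => ?_
      rw [husdef]
      simp only
      field_simp
    rw [hrw]
    refine (Finset.abs_sum_le_sum_abs _ _).trans ?_
    calc ∑ j, |us j * (Qs j i - Q j i)| ≤ ∑ j, us j * matDist Q Qs := by
          refine Finset.sum_le_sum fun j _ => ?_
          rw [abs_mul, abs_of_nonneg (husnn j)]
          refine mul_le_mul_of_nonneg_left ?_ (husnn j)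
          rw [abs_sub_comm]
          exact matDist_le Q Qs j i
      _ = matDist Q Qs := by rw [← Finset.sum_mul, hussum, one_mul]
  have hterm2 : |b - (∑ j, w j * Q j i * g j) / S| ≤
      min ((∑ l, |gs l - g l| * w l) / (∑ j, gs j * w j)) 1 := by
    have hrw : b - (∑ j, w j * Q j i * g j) / S = ∑ j, Q j i * (us j - u j) := by
      rw [hbdef, Finset.sum_div, ← Finset.sum_sub_distrib]
      refine Finset.sum_congr rfl fun j _ => ?_
      rw [husdef, hudef]
      simp only
      field_simp
    have hQQ : ∀ j, Q j i ≤ 1 := by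
      intro j
      have := Finset.single_le_sum (f := Q j) (fun l _ => (hQ j).1.1 l) (Finset.mem_univ i)
      rw [(hQ j).1.2] at this
      exact this
    have hη : ∑ j, (us j - u j) = 0 := by
      rw [Finset.sum_sub_distrib, husum, hussum, sub_self]
    rw [hrw]
    have hhalf := abs_sum_le_half (fun j => Q j i) (fun j => us j - u j)
      (fun j => le_trans hq0.le ((hQ j).2 i)) hQQ hη
    refine hhalf.trans (le_min ?_ ?_)
    · -- ≤ X
      have hnorm := sum_abs_norm (fun j => w j * g j) (fun j => w j * gs j)
        (fun j => mul_nonneg (hwnn j) (hg j)) hS hSs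
      have heq : ∑ j, |us j - u j| = ∑ j, |w j * g j / S - w j * gs j / Ss| := by
        refine Finset.sum_congr rfl fun j _ => ?_
        rw [husdef, hudef]
        simp only
        rw [abs_sub_comm]
      have hden : (∑ j, gs j * w j) = Ss := by
        rw [hSsdef]
        exact Finset.sum_congr rfl fun j _ => mul_comm _ _
      have hnum : (∑ j, |w j * g j - w j * gs j|) = ∑ l, |gs l - g l| * w l := by
        refine Finset.sum_congr rfl fun j _ => ?_
        rw [show w j * g j - w j * gs j = -((gs j - g j) * w j) by ring, abs_neg, abs_mul,
          abs_of_nonneg (hwnn j)]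
      rw [div_le_iff₀ (by positivity), hden]
      calc ∑ j, |us j - u j| ≤ 2 * (∑ j, |w j * g j - w j * gs j|) / Ss := by
            rw [heq]; exact hnorm
        _ = (∑ l, |gs l - g l| * w l) / Ss * 2 := by rw [hnum]; ring
    · -- ≤ 1
      rw [div_le_one (by norm_num : (0:ℝ) < 2)]
      calc ∑ j, |us j - u j| ≤ ∑ j, (us j + u j) := by
            refine Finset.sum_le_sum fun j _ => ?_
            refine (abs_sub _ _).trans ?_
            rw [abs_of_nonneg (husnn j), abs_of_nonneg (hunn j)]
        _ = 2 := by rw [Finset.sum_add_distrib, husum, hussum]; norm_num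
  calc |(∑ j, w j * Qs j i * gs j) / Ss - (∑ j, w j * Q j i * g j) / S|
      ≤ |(∑ j, w j * Qs j i * gs j) / Ss - b| + |b - (∑ j, w j * Q j i * g j) / S| :=
        abs_sub_le _ _ _
    _ ≤ matDist Q Qs + min ((∑ l, |gs l - g l| * w l) / (∑ j, gs j * w j)) 1 :=
        add_le_add hterm1 hterm2

end Aux6
/-- deterministic bound on the `ℓ¹` distance between the prediction filters
of two HMMs, via exponential forgetting. Observations are 0-indexed: paper's `y_s` is
`y (s-1)` and paper's `w_s` is `predFilter … (s-1)`, so paper's `Δ_s` is `Δ s` below. -/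
theorem statement10 (k d : ℕ) (hk : 2 ≤ k)
    (lam : Measure (Fin d → ℝ)) [SigmaFinite lam]
    (q : ℝ) (hq0 : 0 < q) (hq1 : q < 1 / (k : ℝ))
    (Q Qs : Fin k → Fin k → ℝ) (hQ : rowStochasticGe q Q) (hQs : rowStochasticGe q Qs)
    (μ μs : Fin k → ℝ) (hμ : inSimplexGe q μ) (hμs : inSimplexGe q μs)
    (f fs : Fin k → (Fin d → ℝ) → ℝ)
    (hf : ∀ j, IsDensity lam (f j)) (hfs : ∀ j, IsDensity lam (fs j))
    (t : ℕ) (ht : 1 ≤ t) (y : ℕ → (Fin d → ℝ))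
    (hypos : ∀ s, s < t - 1 → 0 < ∑ j, f j (y s) ∧ 0 < ∑ j, fs j (y s))
    (Δ : ℕ → ℝ)
    (hΔ : ∀ s, s < t - 1 →
      Δ (s + 1) = matDist Q Qs / q +
        min ((1 / q) * (∑ i, |fs i (y s) - f i (y s)| * predFilter μs Qs fs y s i) /
              (∑ j, fs j (y s) * predFilter μs Qs fs y s j)) (k : ℝ)) :
    ∑ i, |predFilter μs Qs fs y (t - 1) i - predFilter μ Q f y (t - 1) i|
      ≤ (2 / mixRho k q) * (∑ u ∈ Finset.Icc 1 (t - 1), mixRho k q ^ u * Δ (t - u))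
        + 4 * mixRho k q ^ (t - 1) := by
  
  obtain ⟨n, rfl⟩ : ∃ n, t = n + 1 := ⟨t - 1, by omega⟩
  simp only [Nat.add_sub_cancel] at hypos hΔ ⊢
  have hk1 : 1 ≤ k := by omega
  have hkpos : (0 : ℝ) < (k : ℝ) := Nat.cast_pos.mpr (by omega)
  have hkq : (k : ℝ) * q < 1 := by
    rw [lt_div_iff₀ hkpos] at hq1
    calc (k : ℝ) * q = q * k := mul_comm _ _
      _ < 1 := hq1
  have hρ0 := rho_pos hq0 hkq
  have hρ1 := rho_lt_one hq0 hkq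
  have hf0 : ∀ j x, 0 ≤ f j x := fun j x => (hf j).2.1 x
  have hfs0 : ∀ j x, 0 ≤ fs j x := fun j x => (hfs j).2.1 x
  have hposf : ∀ s, s < n → 0 < ∑ j, f j (y s) := fun s hs => (hypos s hs).1
  have hposfs : ∀ s, s < n → 0 < ∑ j, fs j (y s) := fun s hs => (hypos s hs).2
  have hws : ∀ s, s ≤ n → inSimplexGe q (predFilter μs Qs fs y s) := fun s hs =>
    predFilter_mem hq0 hQs hfs0 hμs y s (fun u hu => hposfs u (by omega))
  set ρ := mixRho k q with hρdef
  set W : Fin k → ℝ := predFilter μ Q f y n with hWdef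
  set G : ℕ → Fin k → ℝ := fun s =>
    predFilter (predFilter μs Qs fs y s) Q f (fun u => y (s + u)) (n - s) with hGdef
  have hGn : G n = predFilter μs Qs fs y n := by
    show predFilter (predFilter μs Qs fs y n) Q f (fun u => y (n + u)) (n - n) = _
    rw [Nat.sub_self]
    rfl
  have hG0 : G 0 = predFilter μs Q f y n := by
    show predFilter (predFilter μs Qs fs y 0) Q f (fun u => y (0 + u)) (n - 0) = _
    have hy0 : (fun u => y (0 + u)) = y := by funext u; rw [Nat.zero_add]
    rw [hy0, Nat.sub_zero]
    rfl
  have hle1 : ∀ (v : Fin k → ℝ), inSimplexGe q v → ∀ i, v i ≤ 1 := by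
    intro v hv i
    have := Finset.single_le_sum (f := v) (fun l _ => hv.1.1 l) (Finset.mem_univ i)
    rw [hv.1.2] at this
    exact this
  -- initial condition forgetting
  have hinit : ∑ i, |G 0 i - W i| ≤ 2 * ρ ^ n := by
    rw [hG0, hWdef]
    have hC2 : ∀ i, |μs i - μ i| ≤ 2 := by
      intro i
      refine (abs_sub _ _).trans ?_
      rw [abs_of_nonneg (hμs.1.1 i), abs_of_nonneg (hμ.1.1 i)]
      linarith [hle1 μs hμs i, hle1 μ hμ i]
    refine (forget hk1 hq0 hkq hQ hf0 n y hposf hμs hμ 2 hC2).trans ?_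
    rw [mul_comm]
    exact mul_le_mul_of_nonneg_right (min_le_left _ _) (pow_nonneg hρ0.le n)
  -- telescoping
  have htel : ∀ m, ∑ i, |G m i - W i| ≤
      (∑ s ∈ Finset.range m, ∑ i, |G (s + 1) i - G s i|) + ∑ i, |G 0 i - W i| := by
    intro m
    induction m with
    | zero => simp
    | succ m ih =>
        calc ∑ i, |G (m + 1) i - W i| ≤ ∑ i, (|G (m + 1) i - G m i| + |G m i - W i|) :=
              Finset.sum_le_sum fun i _ => abs_sub_le _ _ _
          _ = (∑ i, |G (m + 1) i - G m i|) + ∑ i, |G m i - W i| :=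
              Finset.sum_add_distrib
          _ ≤ _ := by rw [Finset.sum_range_succ]; linarith [ih]
  -- per-step bound
  have hstep : ∀ s, s < n → ∑ i, |G (s + 1) i - G s i| ≤ ρ ^ (n - s - 1) * (2 * Δ (s + 1)) := by
    intro s hs
    set w := predFilter μs Qs fs y s with hwdef
    have hwmem : inSimplexGe q w := hws s (by omega)
    set g : Fin k → ℝ := fun j => f j (y s) with hgdef
    set gs : Fin k → ℝ := fun j => fs j (y s) with hgsdef
    set a : Fin k → ℝ := fun i => (∑ j, w j * Q j i * g j) / (∑ j, w j * g j) with hadef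
    set asv : Fin k → ℝ := fun i => (∑ j, w j * Qs j i * gs j) / (∑ j, w j * gs j) with hasdef
    have hamem : inSimplexGe q a := step_mem hq0 hQ hwmem (fun j => hf0 j _) (hposf s hs)
    have hasmem : inSimplexGe q asv := step_mem hq0 hQs hwmem (fun j => hfs0 j _) (hposfs s hs)
    set y1 : ℕ → Fin d → ℝ := fun u => y (s + 1 + u) with hy1def
    have hGs : G s = predFilter a Q f y1 (n - s - 1) := by
      show predFilter w Q f (fun u => y (s + u)) (n - s) = _
      have hsub : n - s = (n - s - 1) + 1 := by omega
      rw [hsub, predFilter_shift]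
      have h1 : predFilter w Q f (fun u => y (s + u)) 1 = a := by
        funext i
        show (∑ j, w j * Q j i * f j (y (s + 0))) / (∑ j, w j * f j (y (s + 0))) = a i
        rw [Nat.add_zero]
      have h2 : (fun u => y (s + (u + 1))) = y1 := by
        funext u
        show y (s + (u + 1)) = y (s + 1 + u)
        have e : s + (u + 1) = s + 1 + u := by omega
        rw [e]
      rw [h1, h2]
      have e : n - s - 1 + 1 - 1 = n - s - 1 := by omega
      rw [e]
    have hGs1 : G (s + 1) = predFilter asv Q f y1 (n - s - 1) := by
      show predFilter (predFilter μs Qs fs y (s + 1)) Q f (fun u => y (s + 1 + u)) (n - (s + 1)) = _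
      have h1 : predFilter μs Qs fs y (s + 1) = asv := rfl
      rw [h1]
      rfl
    have hCb : ∀ i, |asv i - a i| ≤
        matDist Q Qs + min ((∑ l, |gs l - g l| * w l) / (∑ j, gs j * w j)) 1 := fun i =>
      step_diff hq0 hQ hQs hwmem (fun j => hf0 j _) (fun j => hfs0 j _)
        (hposf s hs) (hposfs s hs) i
    have hy1pos : ∀ u, u < n - s - 1 → 0 < ∑ j, f j (y1 u) := by
      intro u hu
      exact hposf (s + 1 + u) (by omega)
    have hforget := forget hk1 hq0 hkq hQ hf0 (n - s - 1) y1 hy1pos hasmem hamem _ hCb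
    rw [hGs1, hGs]
    refine hforget.trans (mul_le_mul_of_nonneg_left ?_ (pow_nonneg hρ0.le _))
    -- min 2 (2*C/q) ≤ 2 * Δ (s+1)
    rw [hΔ s hs]
    have hnum_eq : (∑ l, |gs l - g l| * w l) =
        ∑ i, |fs i (y s) - f i (y s)| * predFilter μs Qs fs y s i := rfl
    have hden_eq : (∑ j, gs j * w j) = ∑ j, fs j (y s) * predFilter μs Qs fs y s j := rfl
    rw [← hnum_eq, ← hden_eq]
    set num := ∑ l, |gs l - g l| * w l with hnumdef
    set den := ∑ j, gs j * w j with hdendef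
    have hden : 0 < den := by
      have : den = ∑ j, w j * gs j := Finset.sum_congr rfl fun j _ => mul_comm _ _
      rw [this]
      exact step_den_pos hq0 hwmem.2 (fun j => hfs0 j _) (hposfs s hs)
    have hnum0 : 0 ≤ num :=
      Finset.sum_nonneg fun l _ =>
        mul_nonneg (abs_nonneg _) (le_trans hq0.le (hwmem.2 l))
    have hXrw : 1 / q * num / den = num / den / q := by
      field_simp
    have hM0 : 0 ≤ matDist Q Qs := matDist_nonneg Q Qs hk1
    by_cases hcase : num / den ≤ q * k
    · have hmin1 : min (1 / q * num / den) (k : ℝ) = 1 / q * num / den := by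
        refine min_eq_left ?_
        rw [hXrw, div_le_iff₀ hq0]
        calc num / den ≤ q * k := hcase
          _ = k * q := mul_comm _ _
      rw [hmin1]
      calc min 2 (2 * (matDist Q Qs + min (num / den) 1) / q)
          ≤ 2 * (matDist Q Qs + min (num / den) 1) / q := min_le_right _ _
        _ ≤ 2 * (matDist Q Qs + num / den) / q := by
            gcongr
            exact min_le_left _ _
        _ = 2 * (matDist Q Qs / q + 1 / q * num / den) := by
            field_simp
    · push_neg at hcase
      have hmin1 : min (1 / q * num / den) (k : ℝ) = (k : ℝ) := by
        refine min_eq_right ?_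
        rw [hXrw, le_div_iff₀ hq0]
        calc (k : ℝ) * q = q * k := mul_comm _ _
          _ ≤ num / den := hcase.le
      rw [hmin1]
      have h2k : (2 : ℝ) ≤ (k : ℝ) := by exact_mod_cast hk
      have hMq : 0 ≤ matDist Q Qs / q := div_nonneg hM0 hq0.le
      calc min 2 (2 * (matDist Q Qs + min (num / den) 1) / q) ≤ 2 := min_le_left _ _
        _ ≤ 2 * (matDist Q Qs / q + (k : ℝ)) := by nlinarith
  -- sum over steps
  have hρne : ρ ≠ 0 := ne_of_gt hρ0
  have hsum_eq : ∑ s ∈ Finset.range n, ρ ^ (n - s - 1) * (2 * Δ (s + 1)) =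
      (2 / ρ) * ∑ u ∈ Finset.Icc 1 n, ρ ^ u * Δ (n + 1 - u) := by
    rw [Finset.mul_sum]
    calc ∑ s ∈ Finset.range n, ρ ^ (n - s - 1) * (2 * Δ (s + 1))
        = ∑ j ∈ Finset.range n, ρ ^ j * (2 * Δ (n - j)) := by
          rw [← Finset.sum_range_reflect]
          refine Finset.sum_congr rfl fun j hj => ?_
          have hj' : j < n := Finset.mem_range.mp hj
          have e1 : n - (n - 1 - j) - 1 = j := by omega
          have e2 : n - 1 - j + 1 = n - j := by omega
          rw [e1, e2]
      _ = ∑ u ∈ Finset.Icc 1 n, 2 / ρ * (ρ ^ u * Δ (n + 1 - u)) := by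
          rw [← Finset.Ico_add_one_right_eq_Icc, Finset.sum_Ico_eq_sum_range]
          refine Finset.sum_congr rfl fun i hi => ?_
          have e3 : n + 1 - (1 + i) = n - i := by
            have := Finset.mem_range.mp hi
            omega
          rw [e3, pow_add, pow_one]
          field_simp
  -- conclude
  rw [← hGn]
  calc ∑ i, |G n i - W i|
      ≤ (∑ s ∈ Finset.range n, ∑ i, |G (s + 1) i - G s i|) + ∑ i, |G 0 i - W i| := htel n
    _ ≤ (∑ s ∈ Finset.range n, ρ ^ (n - s - 1) * (2 * Δ (s + 1))) + 2 * ρ ^ n := by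
        refine add_le_add (Finset.sum_le_sum fun s hsm => hstep s (Finset.mem_range.mp hsm))
          hinit
    _ = (2 / ρ) * (∑ u ∈ Finset.Icc 1 n, ρ ^ u * Δ (n + 1 - u)) + 2 * ρ ^ n := by
        rw [hsum_eq]
    _ ≤ (2 / ρ) * (∑ u ∈ Finset.Icc 1 n, ρ ^ u * Δ (n + 1 - u)) + 4 * ρ ^ n := by
        have : (0 : ℝ) ≤ ρ ^ n := pow_nonneg hρ0.le n
        linarith
end
end

section
/- For every integer k ≥ 1 and all v, w : {1,…,k} → [0,∞) with V := Σ_u v_u > 0 and W := Σ_u w_u > 0: Σ_{u=1}^k | v_u/V − w_u/W | ≤ 2 min( (Σ_{u=1}^k |v_u − w_u|)/W, 1 ). -/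
open MeasureTheory Filter Real

noncomputable section

/-- `Σ_u |v_u/V − w_u/W| ≤ 2 min((Σ_u |v_u − w_u|)/W, 1)`. -/
theorem statement11 (k : ℕ) (hk : 1 ≤ k) (v w : Fin k → ℝ)
    (hv : ∀ u, 0 ≤ v u) (hw : ∀ u, 0 ≤ w u)
    (hV : 0 < ∑ u, v u) (hW : 0 < ∑ u, w u) :
    ∑ u, |v u / (∑ u', v u') - w u / (∑ u', w u')|
      ≤ 2 * min ((∑ u, |v u - w u|) / (∑ u', w u')) 1 := by
  set V := ∑ u', v u' with hVdef
  set W := ∑ u', w u' with hWdef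
  have hV' : V ≠ 0 := hV.ne'
  have hW' : W ≠ 0 := hW.ne'
  rw [mul_min_of_nonneg _ _ (by norm_num : (0:ℝ) ≤ 2)]
  have hWV : |W - V| ≤ ∑ u, |v u - w u| := by
    have h1 : W - V = ∑ u, (w u - v u) := by
      rw [hVdef, hWdef, ← Finset.sum_sub_distrib]
    rw [h1]
    refine (Finset.abs_sum_le_sum_abs _ _).trans ?_
    exact le_of_eq (Finset.sum_congr rfl fun u _ => abs_sub_comm _ _)
  refine le_min ?_ ?_
  · have key : ∀ u : Fin k, |v u / V - w u / W| ≤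
        |v u - w u| / W + v u * |1 / V - 1 / W| := by
      intro u
      have heq : v u / V - w u / W = (v u - w u) / W + v u * (1 / V - 1 / W) := by
        field_simp
        ring
      rw [heq]
      calc |(v u - w u) / W + v u * (1 / V - 1 / W)|
          ≤ |(v u - w u) / W| + |v u * (1 / V - 1 / W)| := abs_add_le _ _
        _ = |v u - w u| / W + v u * |1 / V - 1 / W| := by
            rw [abs_div, abs_of_pos hW, abs_mul, abs_of_nonneg (hv u)]
    refine (Finset.sum_le_sum fun u _ => key u).trans ?_
    rw [Finset.sum_add_distrib, ← Finset.sum_div, ← Finset.sum_mul]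
    have h1 : V * (1 / V - 1 / W) = (W - V) / W := by
      field_simp
    have hVW : V * |1 / V - 1 / W| = |W - V| / W := by
      rw [show V * |1 / V - 1 / W| = |V| * |1 / V - 1 / W| by rw [abs_of_pos hV],
        ← abs_mul, h1, abs_div, abs_of_pos hW]
    rw [hVW]
    have h2 : |W - V| / W ≤ (∑ u, |v u - w u|) / W := by gcongr
    linarith
  · have key : ∀ u : Fin k, |v u / V - w u / W| ≤ v u / V + w u / W := by
      intro u
      refine (abs_sub _ _).trans ?_
      rw [abs_of_nonneg (div_nonneg (hv u) hV.le),
        abs_of_nonneg (div_nonneg (hw u) hW.le)]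
    refine (Finset.sum_le_sum fun u _ => key u).trans ?_
    rw [Finset.sum_add_distrib, ← Finset.sum_div, ← Finset.sum_div,
      ← hVdef, ← hWdef, div_self hV', div_self hW']
    norm_num
end
end

section
/- Let (Ω, F, P) be a probability space with a filtration (F_t)_{t≥0}, and for t = 1,…,n let Z_t be an F_t-measurable, square-integrable real random variable. Then E[ ( Σ_{t=1}^n (E[Z_t | F_{t−1}] − E[Z_t]) )² ] ≤ Σ_{t=1}^n E[Z_t²] + 2 Σ_{1≤r<t≤n} (E[Z_r²])^{1/2} · ( E[ (E[Z_t | F_{r−1}] − E[Z_t])² ] )^{1/2}. -/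
open MeasureTheory Filter Real

noncomputable section

namespace Stmt13Aux


variable {Ω : Type*} {m m0 : MeasurableSpace Ω} {P : Measure Ω}

/-- Product of two L² functions is integrable. -/
lemma integrable_mul_of_memL2 {f g : Ω → ℝ} (hf : MemLp f 2 P) (hg : MemLp g 2 P) :
    Integrable (fun ω => f ω * g ω) P := by
  refine Integrable.mono' ((hf.integrable_sq.add hg.integrable_sq).const_mul (1/2 : ℝ))
    (hf.aestronglyMeasurable.mul hg.aestronglyMeasurable) ?_
  filter_upwards with ω
  have h := sq_nonneg (|f ω| - |g ω|)
  rw [Real.norm_eq_abs, abs_mul]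
  simp only [Pi.add_apply]
  nlinarith [sq_abs (f ω), sq_abs (g ω), abs_nonneg (f ω), abs_nonneg (g ω)]

/-- Cauchy–Schwarz for integrals. -/
lemma integral_mul_le_sqrt_mul_sqrt {f g : Ω → ℝ} (hf : MemLp f 2 P) (hg : MemLp g 2 P) :
    ∫ ω, f ω * g ω ∂P ≤ Real.sqrt (∫ ω, (f ω) ^ 2 ∂P) * Real.sqrt (∫ ω, (g ω) ^ 2 ∂P) := by
  have habs : ∫ ω, |f ω| * |g ω| ∂P
      ≤ (∫ ω, |f ω| ^ (2:ℝ) ∂P) ^ ((1:ℝ)/2) * (∫ ω, |g ω| ^ (2:ℝ) ∂P) ^ ((1:ℝ)/2) := by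
    have h2 : (ENNReal.ofReal (2:ℝ)) = 2 := by norm_num
    refine integral_mul_le_Lp_mul_Lq_of_nonneg Real.HolderConjugate.two_two
      (Eventually.of_forall fun ω => abs_nonneg _)
      (Eventually.of_forall fun ω => abs_nonneg _) ?_ ?_
    · rw [h2]; simpa [Real.norm_eq_abs] using hf.norm
    · rw [h2]; simpa [Real.norm_eq_abs] using hg.norm
  have h1 : ∫ ω, f ω * g ω ∂P ≤ ∫ ω, |f ω| * |g ω| ∂P := by
    refine integral_mono (integrable_mul_of_memL2 hf hg) ?_ ?_
    · simpa [Real.norm_eq_abs] using (integrable_mul_of_memL2 hf hg).abs.congr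
        (Eventually.of_forall fun ω => (abs_mul (f ω) (g ω)))
    · intro ω; calc f ω * g ω ≤ |f ω * g ω| := le_abs_self _
        _ = |f ω| * |g ω| := abs_mul _ _
  refine h1.trans (le_of_eq ?_ |>.trans habs |>.trans (le_of_eq ?_))
  · rfl
  · have e1 : ∫ ω, |f ω| ^ (2:ℝ) ∂P = ∫ ω, (f ω) ^ 2 ∂P := by
      refine integral_congr_ae (Eventually.of_forall fun ω => ?_)
      show |f ω| ^ (2:ℝ) = f ω ^ 2
      rw [Real.rpow_two, sq_abs]
    have e2 : ∫ ω, |g ω| ^ (2:ℝ) ∂P = ∫ ω, (g ω) ^ 2 ∂P := by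
      refine integral_congr_ae (Eventually.of_forall fun ω => ?_)
      show |g ω| ^ (2:ℝ) = g ω ^ 2
      rw [Real.rpow_two, sq_abs]
    rw [e1, e2, Real.sqrt_eq_rpow, Real.sqrt_eq_rpow]

/-- The conditional expectation of an L² function is L². -/
lemma memL2_condexp (hm : m ≤ m0) [IsFiniteMeasure P] {f : Ω → ℝ} (hf : MemLp f 2 P) :
    MemLp (P[f|m]) 2 P := by
  have hfi : Integrable f P := hf.integrable one_le_two
  set g : Lp ℝ 2 P := (condExpL2 ℝ ℝ hm (hf.toLp f) : Lp ℝ 2 P) with hg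
  have heq : (g : Ω → ℝ) =ᵐ[P] P[f|m] := by
    refine ae_eq_condExp_of_forall_setIntegral_eq hm hfi ?_ ?_ ?_
    · intro s _ _
      exact ((Lp.memLp g).integrable one_le_two).integrableOn
    · intro s hs hμs
      rw [hg]
      rw [integral_condExpL2_eq hm (hf.toLp f) hs hμs.ne]
      exact setIntegral_congr_ae (hm s hs) ((hf.coeFn_toLp).mono fun x hx _ => hx)
    · exact aestronglyMeasurable_condExpL2 hm _
  exact (Lp.memLp g).ae_eq heq

/-- Self-adjointness: for `m`-measurable `f`, `∫ f g = ∫ f E[g|m]`. -/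
lemma integral_mul_eq_integral_mul_condexp (hm : m ≤ m0) [IsFiniteMeasure P]
    [SigmaFinite (P.trim hm)] {f g : Ω → ℝ}
    (hfm : StronglyMeasurable[m] f) (hf : MemLp f 2 P) (hg : MemLp g 2 P) :
    ∫ ω, f ω * g ω ∂P = ∫ ω, f ω * (P[g|m]) ω ∂P := by
  have hmul : Integrable (f * g) P := integrable_mul_of_memL2 hf hg
  have h1 : ∫ ω, (f * g) ω ∂P = ∫ ω, (P[f * g|m]) ω ∂P := (integral_condExp hm).symm
  have h2 : P[f * g|m] =ᵐ[P] f * P[g|m] :=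
    condExp_mul_of_stronglyMeasurable_left hfm hmul (hg.integrable one_le_two)
  calc ∫ ω, f ω * g ω ∂P = ∫ ω, (f * g) ω ∂P := rfl
    _ = ∫ ω, (P[f * g|m]) ω ∂P := h1
    _ = ∫ ω, (f * P[g|m]) ω ∂P := integral_congr_ae h2
    _ = ∫ ω, f ω * (P[g|m]) ω ∂P := rfl

/-- L² contraction for condexp. -/
lemma integral_sq_condexp_le (hm : m ≤ m0) [IsFiniteMeasure P]
    [SigmaFinite (P.trim hm)] {g : Ω → ℝ} (hg : MemLp g 2 P) :
    ∫ ω, ((P[g|m]) ω) ^ 2 ∂P ≤ ∫ ω, (g ω) ^ 2 ∂P := by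
  set h := P[g|m] with hh
  have hhm : MemLp h 2 P := memL2_condexp hm hg
  have key : ∫ ω, h ω * g ω ∂P = ∫ ω, (h ω) ^ 2 ∂P := by
    rw [integral_mul_eq_integral_mul_condexp hm stronglyMeasurable_condExp hhm hg]
    exact integral_congr_ae (Eventually.of_forall fun ω => (sq (h ω)).symm)
  have hcs := integral_mul_le_sqrt_mul_sqrt hhm hg
  rw [key] at hcs
  have hA : (0:ℝ) ≤ ∫ ω, (h ω) ^ 2 ∂P := integral_nonneg fun ω => sq_nonneg _
  have hB : (0:ℝ) ≤ ∫ ω, (g ω) ^ 2 ∂P := integral_nonneg fun ω => sq_nonneg _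
  by_contra hcon
  push_neg at hcon
  have hsqrt : Real.sqrt (∫ ω, (g ω) ^ 2 ∂P) < Real.sqrt (∫ ω, (h ω) ^ 2 ∂P) :=
    Real.sqrt_lt_sqrt hB hcon
  have h1 : ∫ ω, (h ω) ^ 2 ∂P < Real.sqrt (∫ ω, (h ω) ^ 2 ∂P) * Real.sqrt (∫ ω, (h ω) ^ 2 ∂P) :=
    lt_of_le_of_lt hcs (by
      refine mul_lt_mul_of_pos_left hsqrt ?_
      have : (0:ℝ) < ∫ ω, (h ω) ^ 2 ∂P := lt_of_le_of_lt hB hcon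
      exact Real.sqrt_pos.mpr (lt_of_le_of_lt hB hcon))
  rw [Real.mul_self_sqrt hA] at h1
  exact lt_irrefl _ h1



lemma sum_sq_expand (s : Finset ℕ) (a : ℕ → ℕ → ℝ) (hsym : ∀ t u, a t u = a u t) :
    ∑ t ∈ s, ∑ u ∈ s, a t u
      = ∑ t ∈ s, a t t + 2 * ∑ t ∈ s, ∑ u ∈ s.filter (· < t), a u t := by
  classical
  have hsplit : ∀ t ∈ s, ∑ u ∈ s, a t u
      = (∑ u ∈ s.filter (· < t), a t u) + (a t t + ∑ u ∈ s.filter (fun u => t < u), a t u) := by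
    intro t ht
    rw [← Finset.sum_filter_add_sum_filter_not s (· < t) (a t)]
    congr 1
    have h2 : s.filter (fun u => ¬ u < t) = insert t (s.filter (fun u => t < u)) := by
      ext u
      simp only [Finset.mem_filter, Finset.mem_insert]
      constructor
      · rintro ⟨hu, h⟩
        rcases (not_lt.mp h).lt_or_eq with h' | h'
        · exact Or.inr ⟨hu, h'⟩
        · exact Or.inl h'.symm
      · rintro (rfl | ⟨hu, h⟩)
        · exact ⟨ht, lt_irrefl _⟩
        · exact ⟨hu, not_lt.mpr h.le⟩
    rw [h2, Finset.sum_insert (by simp)]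
  rw [Finset.sum_congr rfl hsplit, Finset.sum_add_distrib, Finset.sum_add_distrib]
  have hswap : ∑ t ∈ s, ∑ u ∈ s.filter (fun u => t < u), a t u
      = ∑ t ∈ s, ∑ u ∈ s.filter (· < t), a u t := by
    exact Finset.sum_comm' (t' := s) (s' := fun y => s.filter (· < y)) fun x y => by
      simp only [Finset.mem_filter]
      constructor
      · rintro ⟨hx, hy, hxy⟩; exact ⟨⟨hx, hxy⟩, hy⟩
      · rintro ⟨⟨hx, hxy⟩, hy⟩; exact ⟨hx, hy, hxy⟩
  have habs : ∑ t ∈ s, ∑ u ∈ s.filter (· < t), a t u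
      = ∑ t ∈ s, ∑ u ∈ s.filter (· < t), a u t := by
    refine Finset.sum_congr rfl fun t _ => Finset.sum_congr rfl fun u _ => hsym t u
  rw [hswap, habs]
  ring


end Stmt13Aux

open Stmt13Aux in
/-- second-moment bound for the sum of the centered conditional
expectations `E[Z_t | F_{t−1}] − E[Z_t]`. -/
theorem statement13 {Ω : Type*} {m0 : MeasurableSpace Ω}
    (P : Measure Ω) [IsProbabilityMeasure P]
    (ℱ : Filtration ℕ m0) (n : ℕ) (Z : ℕ → Ω → ℝ)
    (hadapt : ∀ t ∈ Finset.Icc 1 n, StronglyMeasurable[ℱ t] (Z t))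
    (hsq : ∀ t ∈ Finset.Icc 1 n, MemLp (Z t) 2 P) :
    ∫ ω, (∑ t ∈ Finset.Icc 1 n, ((P[Z t|ℱ (t - 1)]) ω - ∫ ω', Z t ω' ∂P)) ^ 2 ∂P
      ≤ ∑ t ∈ Finset.Icc 1 n, ∫ ω, (Z t ω) ^ 2 ∂P
        + 2 * ∑ t ∈ Finset.Icc 1 n, ∑ r ∈ Finset.Ico 1 t,
            Real.sqrt (∫ ω, (Z r ω) ^ 2 ∂P) *
              Real.sqrt (∫ ω, ((P[Z t|ℱ (r - 1)]) ω - ∫ ω', Z t ω' ∂P) ^ 2 ∂P) := by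
  classical
  set s : Finset ℕ := Finset.Icc 1 n with hs
  set c : ℕ → ℝ := fun t => ∫ ω', Z t ω' ∂P with hc
  set Y : ℕ → Ω → ℝ := fun t ω => (P[Z t|ℱ (t - 1)]) ω - c t with hY
  -- L² membership of Y t
  have hY2 : ∀ t ∈ s, MemLp (Y t) 2 P := fun t ht =>
    (memL2_condexp (ℱ.le (t - 1)) (hsq t ht)).sub (memLp_const (c t))
  -- diagonal bound
  have hYsq_le : ∀ t ∈ s, ∫ ω, (Y t ω) ^ 2 ∂P ≤ ∫ ω, (Z t ω) ^ 2 ∂P := by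
    intro t ht
    have hint : Integrable (Z t) P := (hsq t ht).integrable one_le_two
    have hZsq : Integrable (fun ω => (Z t ω) ^ 2) P := (hsq t ht).integrable_sq
    set Zc : Ω → ℝ := fun ω => Z t ω - c t with hZc
    have hZc2 : MemLp Zc 2 P := (hsq t ht).sub (memLp_const (c t))
    have hYeq : (P[Zc|ℱ (t - 1)]) =ᵐ[P] Y t := by
      have h1 : (P[Zc|ℱ (t - 1)])
          =ᵐ[P] P[Z t|ℱ (t - 1)] - P[(fun _ => c t)|ℱ (t - 1)] :=
        condExp_sub hint (integrable_const (c t)) _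
      have h2 : P[(fun _ => c t)|ℱ (t - 1)] = fun _ => c t :=
        condExp_const (ℱ.le (t - 1)) (c t)
      filter_upwards [h1] with ω hω
      simp only [hY, Pi.sub_apply, h2] at hω ⊢
      exact hω
    have e1 : ∫ ω, (Y t ω) ^ 2 ∂P = ∫ ω, ((P[Zc|ℱ (t - 1)]) ω) ^ 2 ∂P := by
      refine integral_congr_ae ?_
      filter_upwards [hYeq] with ω hω
      rw [hω]
    have e2 : ∫ ω, ((P[Zc|ℱ (t - 1)]) ω) ^ 2 ∂P ≤ ∫ ω, (Zc ω) ^ 2 ∂P :=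
      integral_sq_condexp_le (ℱ.le (t - 1)) hZc2
    have e3 : ∫ ω, (Zc ω) ^ 2 ∂P ≤ ∫ ω, (Z t ω) ^ 2 ∂P := by
      have expand : ∫ ω, (Zc ω) ^ 2 ∂P
          = ∫ ω, (Z t ω) ^ 2 ∂P - (2 * c t) * (∫ ω, Z t ω ∂P) + (c t) ^ 2 := by
        have he : (fun ω => (Zc ω) ^ 2)
            = fun ω => ((Z t ω) ^ 2 - (2 * c t) * Z t ω + (c t) ^ 2) := by
          funext ω; simp only [hZc]; ring
        have hi1 : Integrable (fun ω => (Z t ω) ^ 2 - (2 * c t) * Z t ω) P :=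
          hZsq.sub (hint.const_mul (2 * c t))
        rw [he, integral_add hi1 (integrable_const _),
          integral_sub hZsq (hint.const_mul (2 * c t)), integral_const_mul,
          integral_const]
        simp [measure_univ]
      rw [expand]
      have hcc : ∫ ω, Z t ω ∂P = c t := rfl
      rw [hcc]
      nlinarith [sq_nonneg (c t)]
    rw [e1]; exact e2.trans e3
  -- product integrability
  have hprod : ∀ t ∈ s, ∀ u ∈ s, Integrable (fun ω => Y t ω * Y u ω) P :=
    fun t ht u hu => integrable_mul_of_memL2 (hY2 t ht) (hY2 u hu)
  -- expansion of the square of the sum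
  have hexp : ∫ ω, (∑ t ∈ s, Y t ω) ^ 2 ∂P
      = ∑ t ∈ s, ∑ u ∈ s, ∫ ω, Y t ω * Y u ω ∂P := by
    have e : ∀ ω, (∑ t ∈ s, Y t ω) ^ 2 = ∑ t ∈ s, ∑ u ∈ s, Y t ω * Y u ω := fun ω => by
      rw [sq, Finset.sum_mul_sum]
    calc ∫ ω, (∑ t ∈ s, Y t ω) ^ 2 ∂P
        = ∫ ω, ∑ t ∈ s, ∑ u ∈ s, Y t ω * Y u ω ∂P := by
          exact integral_congr_ae (Eventually.of_forall e)
      _ = ∑ t ∈ s, ∫ ω, ∑ u ∈ s, Y t ω * Y u ω ∂P :=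
          integral_finset_sum s fun t ht => integrable_finset_sum s fun u hu => hprod t ht u hu
      _ = ∑ t ∈ s, ∑ u ∈ s, ∫ ω, Y t ω * Y u ω ∂P :=
          Finset.sum_congr rfl fun t ht => integral_finset_sum s fun u hu => hprod t ht u hu
  -- symmetric double-sum expansion
  have hsym : ∀ t u, (∫ ω, Y t ω * Y u ω ∂P) = ∫ ω, Y u ω * Y t ω ∂P := by
    intro t u
    exact integral_congr_ae (Eventually.of_forall fun ω => mul_comm _ _)
  have hdecomp := sum_sq_expand s (fun t u => ∫ ω, Y t ω * Y u ω ∂P) hsym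
  -- filter = Ico
  have hfilter : ∀ t ∈ s, s.filter (· < t) = Finset.Ico 1 t := by
    intro t ht
    have htn : t ≤ n := (Finset.mem_Icc.mp ht).2
    ext r
    simp only [hs, Finset.mem_filter, Finset.mem_Icc, Finset.mem_Ico]
    omega
  -- cross-term bound
  have hcross : ∀ t ∈ s, ∀ r ∈ Finset.Ico 1 t,
      ∫ ω, Y r ω * Y t ω ∂P
        ≤ Real.sqrt (∫ ω, (Z r ω) ^ 2 ∂P) *
            Real.sqrt (∫ ω, ((P[Z t|ℱ (r - 1)]) ω - c t) ^ 2 ∂P) := by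
    intro t ht r hr
    obtain ⟨hr1, hrt⟩ := Finset.mem_Ico.mp hr
    have hrs : r ∈ s := Finset.mem_Icc.mpr ⟨hr1, le_trans hrt.le (Finset.mem_Icc.mp ht).2⟩
    set W : Ω → ℝ := fun ω => (P[Z t|ℱ (r - 1)]) ω - c t with hW
    have hW2 : MemLp W 2 P := (memL2_condexp (ℱ.le (r - 1)) (hsq t ht)).sub (memLp_const (c t))
    have hYrm : StronglyMeasurable[ℱ (r - 1)] (Y r) :=
      stronglyMeasurable_condExp.sub stronglyMeasurable_const
    have step1 : ∫ ω, Y r ω * Y t ω ∂P = ∫ ω, Y r ω * (P[Y t|ℱ (r - 1)]) ω ∂P :=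
      integral_mul_eq_integral_mul_condexp (ℱ.le (r - 1)) hYrm (hY2 r hrs) (hY2 t ht)
    have step2 : (P[Y t|ℱ (r - 1)]) =ᵐ[P] W := by
      have h1 : (P[Y t|ℱ (r - 1)])
          =ᵐ[P] P[P[Z t|ℱ (t - 1)]|ℱ (r - 1)] - P[(fun _ => c t)|ℱ (r - 1)] :=
        condExp_sub integrable_condExp (integrable_const (c t)) _
      have h2 : P[(fun _ => c t)|ℱ (r - 1)] = fun _ => c t :=
        condExp_const (ℱ.le (r - 1)) (c t)
      have h3 : (P[P[Z t|ℱ (t - 1)]|ℱ (r - 1)]) =ᵐ[P] P[Z t|ℱ (r - 1)] :=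
        condExp_condExp_of_le (ℱ.mono (by omega)) (ℱ.le (t - 1))
      filter_upwards [h1, h3] with ω hω1 hω3
      simp only [Pi.sub_apply, h2] at hω1
      simp only [hW, hω1, hω3]
    have step3 : ∫ ω, Y r ω * (P[Y t|ℱ (r - 1)]) ω ∂P = ∫ ω, Y r ω * W ω ∂P := by
      refine integral_congr_ae ?_
      filter_upwards [step2] with ω hω
      rw [hω]
    have step4 : ∫ ω, Y r ω * W ω ∂P
        ≤ Real.sqrt (∫ ω, (Y r ω) ^ 2 ∂P) * Real.sqrt (∫ ω, (W ω) ^ 2 ∂P) :=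
      integral_mul_le_sqrt_mul_sqrt (hY2 r hrs) hW2
    have step5 : Real.sqrt (∫ ω, (Y r ω) ^ 2 ∂P) ≤ Real.sqrt (∫ ω, (Z r ω) ^ 2 ∂P) :=
      Real.sqrt_le_sqrt (hYsq_le r hrs)
    calc ∫ ω, Y r ω * Y t ω ∂P = ∫ ω, Y r ω * W ω ∂P := step1.trans step3
      _ ≤ Real.sqrt (∫ ω, (Y r ω) ^ 2 ∂P) * Real.sqrt (∫ ω, (W ω) ^ 2 ∂P) := step4
      _ ≤ Real.sqrt (∫ ω, (Z r ω) ^ 2 ∂P) * Real.sqrt (∫ ω, (W ω) ^ 2 ∂P) :=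
          mul_le_mul_of_nonneg_right step5 (Real.sqrt_nonneg _)
  -- put everything together
  have hLHS : ∫ ω, (∑ t ∈ s, Y t ω) ^ 2 ∂P
      = ∑ t ∈ s, ∫ ω, (Y t ω) ^ 2 ∂P
        + 2 * ∑ t ∈ s, ∑ r ∈ Finset.Ico 1 t, ∫ ω, Y r ω * Y t ω ∂P := by
    rw [hexp, hdecomp]
    congr 1
    · refine Finset.sum_congr rfl fun t ht => integral_congr_ae
        (Eventually.of_forall fun ω => (sq (Y t ω)).symm)
    · congr 1
      exact Finset.sum_congr rfl fun t ht => by rw [hfilter t ht]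
  calc ∫ ω, (∑ t ∈ s, Y t ω) ^ 2 ∂P
      = ∑ t ∈ s, ∫ ω, (Y t ω) ^ 2 ∂P
        + 2 * ∑ t ∈ s, ∑ r ∈ Finset.Ico 1 t, ∫ ω, Y r ω * Y t ω ∂P := hLHS
    _ ≤ ∑ t ∈ s, ∫ ω, (Z t ω) ^ 2 ∂P
        + 2 * ∑ t ∈ s, ∑ r ∈ Finset.Ico 1 t,
            Real.sqrt (∫ ω, (Z r ω) ^ 2 ∂P) *
              Real.sqrt (∫ ω, ((P[Z t|ℱ (r - 1)]) ω - c t) ^ 2 ∂P) := by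
        refine add_le_add (Finset.sum_le_sum hYsq_le) ?_
        refine mul_le_mul_of_nonneg_left ?_ (by norm_num)
        exact Finset.sum_le_sum fun t ht => Finset.sum_le_sum fun r hr => hcross t ht r hr
end
end

section
/- Let k ≥ 1, q ∈ (0,1), μ, μ̃, μ*, μ̃* ∈ Δ_k(q), and let a_1,…,a_k, b_1,…,b_k ≥ 0 with a_{i₀} > 0 and b_{j₀} > 0 for some indices i₀, j₀ (so that all the sums below are positive). Then | log( (Σ_i μ*_i a_i)/(Σ_i μ_i b_i) ) − log( (Σ_i μ̃*_i a_i)/(Σ_i μ̃_i b_i) ) | ≤ (1/q) ( Σ_{i=1}^k |μ*_i − μ̃*_i| + Σ_{i=1}^k |μ_i − μ̃_i| ). -/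
open MeasureTheory Filter Real

noncomputable section

private lemma log_diff_le' {S S' m c : ℝ} (hm : 0 < m) (hS' : m ≤ S')
    (hle : S' ≤ S) (h : S - S' ≤ c) : Real.log S - Real.log S' ≤ c / m := by
  have hS'0 : 0 < S' := lt_of_lt_of_le hm hS'
  have hS0 : 0 < S := lt_of_lt_of_le hS'0 hle
  have h1 : Real.log S - Real.log S' = Real.log (S / S') := by
    rw [Real.log_div hS0.ne' hS'0.ne']
  rw [h1]
  have h2 : Real.log (S / S') ≤ S / S' - 1 :=
    Real.log_le_sub_one_of_pos (div_pos hS0 hS'0)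
  have h3 : S / S' - 1 = (S - S') / S' := by field_simp
  have h4 : (S - S') / S' ≤ c / m := by
    apply div_le_div₀ (le_trans (by linarith) h) h hm hS'
  linarith

private lemma log_diff_abs_le {S S' m c : ℝ} (hm : 0 < m) (hS : m ≤ S) (hS' : m ≤ S')
    (h : |S - S'| ≤ c) : |Real.log S - Real.log S'| ≤ c / m := by
  rcases le_total S' S with hle | hle
  · rw [abs_of_nonneg (by linarith [Real.log_le_log (lt_of_lt_of_le hm hS') hle] :
      (0:ℝ) ≤ Real.log S - Real.log S')]
    exact log_diff_le' hm hS' hle (le_trans (le_abs_self _) h)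
  · rw [abs_sub_comm] at h ⊢
    rw [abs_of_nonneg (by linarith [Real.log_le_log (lt_of_lt_of_le hm hS) hle] :
      (0:ℝ) ≤ Real.log S' - Real.log S)]
    exact log_diff_le' hm hS hle (le_trans (le_abs_self _) h)

private lemma key_lemma {k : ℕ} {q : ℝ} (hq0 : 0 < q) {ν ν' a : Fin k → ℝ}
    (hν : inSimplexGe q ν) (hν' : inSimplexGe q ν') (ha : ∀ i, 0 ≤ a i)
    {i₀ : Fin k} (hai : 0 < a i₀) :
    |Real.log (∑ i, ν i * a i) - Real.log (∑ i, ν' i * a i)|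
      ≤ (1 / q) * ∑ i, |ν i - ν' i| := by
  set A := ∑ i, a i with hA
  have hA0 : 0 < A := Finset.sum_pos' (fun i _ => ha i) ⟨i₀, Finset.mem_univ _, hai⟩
  have hm : 0 < q * A := mul_pos hq0 hA0
  have hS : ∀ (w : Fin k → ℝ), (∀ i, q ≤ w i) → q * A ≤ ∑ i, w i * a i := by
    intro w hw
    rw [hA, Finset.mul_sum]
    exact Finset.sum_le_sum fun i _ => mul_le_mul_of_nonneg_right (hw i) (ha i)
  have hdiff : |(∑ i, ν i * a i) - ∑ i, ν' i * a i| ≤ (∑ i, |ν i - ν' i|) * A := by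
    rw [← Finset.sum_sub_distrib]
    calc |∑ i, (ν i * a i - ν' i * a i)| ≤ ∑ i, |ν i * a i - ν' i * a i| :=
          Finset.abs_sum_le_sum_abs _ _
      _ ≤ ∑ i, |ν i - ν' i| * A := by
          apply Finset.sum_le_sum
          intro i _
          rw [← sub_mul, abs_mul, abs_of_nonneg (ha i)]
          exact mul_le_mul_of_nonneg_left
            (Finset.single_le_sum (fun j _ => ha j) (Finset.mem_univ i))
            (abs_nonneg _)
      _ = (∑ i, |ν i - ν' i|) * A := by rw [Finset.sum_mul]
  have := log_diff_abs_le hm (hS ν hν.2) (hS ν' hν'.2) hdiff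
  calc |Real.log (∑ i, ν i * a i) - Real.log (∑ i, ν' i * a i)|
      ≤ (∑ i, |ν i - ν' i|) * A / (q * A) := this
    _ = (1 / q) * ∑ i, |ν i - ν' i| := by field_simp

/-- Lipschitz continuity of the log-ratio in the mixing weights. -/
theorem statement15 (k : ℕ) (hk : 1 ≤ k) (q : ℝ) (hq0 : 0 < q) (hq1 : q < 1)
    (μ μt μs μts : Fin k → ℝ)
    (hμ : inSimplexGe q μ) (hμt : inSimplexGe q μt)
    (hμs : inSimplexGe q μs) (hμts : inSimplexGe q μts)
    (a b : Fin k → ℝ) (ha : ∀ i, 0 ≤ a i) (hb : ∀ i, 0 ≤ b i)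
    (i₀ j₀ : Fin k) (hai : 0 < a i₀) (hbj : 0 < b j₀) :
    |Real.log ((∑ i, μs i * a i) / (∑ i, μ i * b i))
        - Real.log ((∑ i, μts i * a i) / (∑ i, μt i * b i))|
      ≤ (1 / q) * ((∑ i, |μs i - μts i|) + ∑ i, |μ i - μt i|) := by
  have hSa : 0 < ∑ i, μs i * a i :=
    Finset.sum_pos' (fun i _ => mul_nonneg (le_trans hq0.le (hμs.2 i)) (ha i))
      ⟨i₀, Finset.mem_univ _, mul_pos (lt_of_lt_of_le hq0 (hμs.2 i₀)) hai⟩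
  have hSa' : 0 < ∑ i, μts i * a i :=
    Finset.sum_pos' (fun i _ => mul_nonneg (le_trans hq0.le (hμts.2 i)) (ha i))
      ⟨i₀, Finset.mem_univ _, mul_pos (lt_of_lt_of_le hq0 (hμts.2 i₀)) hai⟩
  have hSb : 0 < ∑ i, μ i * b i :=
    Finset.sum_pos' (fun i _ => mul_nonneg (le_trans hq0.le (hμ.2 i)) (hb i))
      ⟨j₀, Finset.mem_univ _, mul_pos (lt_of_lt_of_le hq0 (hμ.2 j₀)) hbj⟩
  have hSb' : 0 < ∑ i, μt i * b i :=
    Finset.sum_pos' (fun i _ => mul_nonneg (le_trans hq0.le (hμt.2 i)) (hb i))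
      ⟨j₀, Finset.mem_univ _, mul_pos (lt_of_lt_of_le hq0 (hμt.2 j₀)) hbj⟩
  rw [Real.log_div hSa.ne' hSb.ne', Real.log_div hSa'.ne' hSb'.ne']
  have h1 := key_lemma hq0 hμs hμts ha hai
  have h2 := key_lemma hq0 hμ hμt hb hbj
  calc |Real.log (∑ i, μs i * a i) - Real.log (∑ i, μ i * b i)
        - (Real.log (∑ i, μts i * a i) - Real.log (∑ i, μt i * b i))|
      ≤ |Real.log (∑ i, μs i * a i) - Real.log (∑ i, μts i * a i)|
        + |Real.log (∑ i, μ i * b i) - Real.log (∑ i, μt i * b i)| := by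
        have : Real.log (∑ i, μs i * a i) - Real.log (∑ i, μ i * b i)
            - (Real.log (∑ i, μts i * a i) - Real.log (∑ i, μt i * b i))
            = (Real.log (∑ i, μs i * a i) - Real.log (∑ i, μts i * a i))
              - (Real.log (∑ i, μ i * b i) - Real.log (∑ i, μt i * b i)) := by ring
        rw [this]
        exact abs_sub _ _
    _ ≤ (1 / q) * ((∑ i, |μs i - μts i|) + ∑ i, |μ i - μt i|) := by
        rw [mul_add]; exact add_le_add h1 h2
end
end

section
/- Let k ≥ 1, q ∈ (0,1), w, w* ∈ Δ_k(q), and let a_1,…,a_k, b_1,…,b_k be positive reals. Then log²( (Σ_i w*_i a_i)/(Σ_i w_i b_i) ) ≤ 2 max_{1≤j≤k} log²(a_j/b_j) + (2/q²) ( Σ_{j=1}^k |w*_j − w_j| )². -/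
open MeasureTheory Filter Real

noncomputable section

lemma log_diff_aux (x y c m q : ℝ) (hx : 0 < x) (hy : 0 < y) (hq : 0 < q)
    (hm : 0 < m) (hc : 0 ≤ c) (hyc : q * m ≤ y) (hd : x - y ≤ m * c) :
    Real.log x - Real.log y ≤ c / q := by
  have h1 : Real.log (x / y) ≤ x / y - 1 := Real.log_le_sub_one_of_pos (by positivity)
  have h2 : Real.log (x / y) = Real.log x - Real.log y := Real.log_div hx.ne' hy.ne'
  have h3 : x / y - 1 ≤ c / q := by
    rw [div_sub_one hy.ne', div_le_div_iff₀ hy hq]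
    nlinarith [mul_le_mul_of_nonneg_left hyc hc]
  linarith

/-- `log²((Σ w*_i a_i)/(Σ w_i b_i)) ≤ 2 max_j log²(a_j/b_j) + (2/q²)(Σ_j |w*_j − w_j|)²`. -/
theorem statement17 (k : ℕ) (hk : 1 ≤ k) (q : ℝ) (hq0 : 0 < q) (hq1 : q < 1)
    (w ws : Fin k → ℝ) (hw : inSimplexGe q w) (hws : inSimplexGe q ws)
    (a b : Fin k → ℝ) (ha : ∀ i, 0 < a i) (hb : ∀ i, 0 < b i) :
    (Real.log ((∑ i, ws i * a i) / (∑ i, w i * b i))) ^ 2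
      ≤ 2 * (⨆ j, (Real.log (a j / b j)) ^ 2)
        + (2 / q ^ 2) * (∑ j, |ws j - w j|) ^ 2 := by
  haveI : Nonempty (Fin k) := Fin.pos_iff_nonempty.mp hk
  have hwpos : ∀ i, 0 < w i := fun i => lt_of_lt_of_le hq0 (hw.2 i)
  have hwspos : ∀ i, 0 < ws i := fun i => lt_of_lt_of_le hq0 (hws.2 i)
  set S1 := ∑ i, ws i * a i with hS1def
  set S2 := ∑ i, w i * a i with hS2def
  set S3 := ∑ i, w i * b i with hS3def
  set D := ∑ j, |ws j - w j| with hDdef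
  have hS1 : 0 < S1 := Finset.sum_pos (fun i _ => mul_pos (hwspos i) (ha i)) Finset.univ_nonempty
  have hS2 : 0 < S2 := Finset.sum_pos (fun i _ => mul_pos (hwpos i) (ha i)) Finset.univ_nonempty
  have hS3 : 0 < S3 := Finset.sum_pos (fun i _ => mul_pos (hwpos i) (hb i)) Finset.univ_nonempty
  have hD : 0 ≤ D := Finset.sum_nonneg fun j _ => abs_nonneg _
  -- max of a
  obtain ⟨i0, hi0⟩ := Finite.exists_max a
  -- bound |S1 - S2| ≤ a i0 * D
  have hdiff : |S1 - S2| ≤ a i0 * D := by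
    have : S1 - S2 = ∑ i, (ws i - w i) * a i := by
      rw [hS1def, hS2def, ← Finset.sum_sub_distrib]
      exact Finset.sum_congr rfl fun i _ => by ring
    rw [this]
    calc |∑ i, (ws i - w i) * a i| ≤ ∑ i, |(ws i - w i) * a i| :=
          Finset.abs_sum_le_sum_abs _ _
      _ ≤ ∑ i, |ws i - w i| * a i0 := by
          refine Finset.sum_le_sum fun i _ => ?_
          rw [abs_mul, abs_of_pos (ha i)]
          exact mul_le_mul_of_nonneg_left (hi0 i) (abs_nonneg _)
      _ = a i0 * D := by rw [← Finset.sum_mul, hDdef]; ring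
  have hS2low : q * a i0 ≤ S2 := by
    calc q * a i0 ≤ w i0 * a i0 := mul_le_mul_of_nonneg_right (hw.2 i0) (ha i0).le
      _ ≤ S2 := Finset.single_le_sum (fun i _ => (mul_pos (hwpos i) (ha i)).le)
          (Finset.mem_univ i0)
  have hS1low : q * a i0 ≤ S1 := by
    calc q * a i0 ≤ ws i0 * a i0 := mul_le_mul_of_nonneg_right (hws.2 i0) (ha i0).le
      _ ≤ S1 := Finset.single_le_sum (fun i _ => (mul_pos (hwspos i) (ha i)).le)
          (Finset.mem_univ i0)
  have hA1 : Real.log S1 - Real.log S2 ≤ D / q :=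
    log_diff_aux S1 S2 D (a i0) q hS1 hS2 hq0 (ha i0) hD hS2low
      (by have := abs_le.mp hdiff; linarith [this.2])
  have hA2 : Real.log S2 - Real.log S1 ≤ D / q :=
    log_diff_aux S2 S1 D (a i0) q hS2 hS1 hq0 (ha i0) hD hS1low
      (by have := abs_le.mp hdiff; linarith [this.1])
  set A := Real.log S1 - Real.log S2 with hAdef
  have hAsq : A ^ 2 ≤ (D / q) ^ 2 := sq_le_sq' (by linarith) hA1
  -- B bounds
  obtain ⟨j1, hj1⟩ := Finite.exists_max (fun j => a j / b j)
  obtain ⟨j2, hj2⟩ := Finite.exists_min (fun j => a j / b j)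
  set B := Real.log S2 - Real.log S3 with hBdef
  have hup : S2 ≤ (a j1 / b j1) * S3 := by
    rw [hS3def, Finset.mul_sum, hS2def]
    refine Finset.sum_le_sum fun i _ => ?_
    have : a i ≤ (a j1 / b j1) * b i := (div_le_iff₀ (hb i)).mp (hj1 i)
    calc w i * a i ≤ w i * ((a j1 / b j1) * b i) :=
          mul_le_mul_of_nonneg_left this (hwpos i).le
      _ = a j1 / b j1 * (w i * b i) := by ring
  have hlow : (a j2 / b j2) * S3 ≤ S2 := by
    rw [hS3def, Finset.mul_sum, hS2def]
    refine Finset.sum_le_sum fun i _ => ?_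
    have : (a j2 / b j2) * b i ≤ a i := by
      have h := mul_le_mul_of_nonneg_right (hj2 i) (hb i).le
      rwa [div_mul_cancel₀ _ (hb i).ne'] at h
    calc a j2 / b j2 * (w i * b i) = w i * ((a j2 / b j2) * b i) := by ring
      _ ≤ w i * a i := mul_le_mul_of_nonneg_left this (hwpos i).le
  have hBup : B ≤ Real.log (a j1 / b j1) := by
    rw [hBdef, ← Real.log_div hS2.ne' hS3.ne']
    apply Real.log_le_log (by positivity)
    rw [div_le_iff₀ hS3]
    exact hup
  have hBlow : Real.log (a j2 / b j2) ≤ B := by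
    rw [hBdef, ← Real.log_div hS2.ne' hS3.ne']
    apply Real.log_le_log (div_pos (ha j2) (hb j2))
    rw [le_div_iff₀ hS3]
    exact hlow
  have hbdd : BddAbove (Set.range fun j => (Real.log (a j / b j)) ^ 2) :=
    (Set.finite_range _).bddAbove
  have hsup1 : (Real.log (a j1 / b j1)) ^ 2 ≤ ⨆ j, (Real.log (a j / b j)) ^ 2 :=
    le_ciSup hbdd j1
  have hsup2 : (Real.log (a j2 / b j2)) ^ 2 ≤ ⨆ j, (Real.log (a j / b j)) ^ 2 :=
    le_ciSup hbdd j2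
  have hBsq : B ^ 2 ≤ ⨆ j, (Real.log (a j / b j)) ^ 2 := by
    rcases le_or_gt 0 B with h | h
    · exact le_trans (sq_le_sq' (by linarith) hBup) hsup1
    · have h2 : B ^ 2 ≤ (-Real.log (a j2 / b j2)) ^ 2 :=
        sq_le_sq' (by linarith) (by linarith)
      rw [neg_pow] at h2
      simp only [neg_one_sq] at h2
      calc B ^ 2 ≤ 1 * Real.log (a j2 / b j2) ^ 2 := h2
        _ = Real.log (a j2 / b j2) ^ 2 := by ring
        _ ≤ _ := hsup2
  have hsplit : Real.log (S1 / S3) = A + B := by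
    rw [Real.log_div hS1.ne' hS3.ne', hAdef, hBdef]; ring
  rw [hsplit]
  have hq2 : 0 < q ^ 2 := by positivity
  have hDq : (D / q) ^ 2 = D ^ 2 / q ^ 2 := by rw [div_pow]
  have h2ab : (A + B) ^ 2 ≤ 2 * A ^ 2 + 2 * B ^ 2 := by nlinarith [sq_nonneg (A - B)]
  calc (A + B) ^ 2 ≤ 2 * A ^ 2 + 2 * B ^ 2 := h2ab
    _ ≤ 2 * (⨆ j, (Real.log (a j / b j)) ^ 2) + 2 / q ^ 2 * D ^ 2 := by
        rw [hDq] at hAsq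
        have : 2 / q ^ 2 * D ^ 2 = 2 * (D ^ 2 / q ^ 2) := by ring
        rw [this]; linarith
end
end
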